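/- arXiv:2103.07913 — 4 statements merged into one kernel-verified Lean document; each statement's English description precedes it below -/
import Mathlib

section
/- Let κ be an infinite cardinal. Every κ-regular graph has a decomposition of its edge set into perfect matchings (equivalently, a 1-factorization). -/
open Cardinal

universe u

/-- `G` is `κ`-regular: every vertex has degree (neighbourhood cardinality) exactly `κ`. -/
def SimpleGraph.CardRegular {V : Type u} (G : SimpleGraph V) (κ : Cardinal.{u}) : Prop :=
  ∀ v : V, #(G.neighborSet v) = κ

/-- `G` has no isolated vertices. -/
def SimpleGraph.NoIsolatedVerts {V : Type u} (G : SimpleGraph V) : Prop :=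
  ∀ v : V, ∃ w : V, G.Adj v w

/-- A factorization of `G`: a family of spanning subgraphs, pairwise edge-disjoint,
whose edge sets cover `E(G)`. -/
def SimpleGraph.IsFactorization {V : Type u} {ι : Type u} (G : SimpleGraph V)
    (F : ι → SimpleGraph V) : Prop :=
  (∀ i, F i ≤ G) ∧ (Pairwise fun i j => Disjoint (F i).edgeSet (F j).edgeSet) ∧
    (⋃ i, (F i).edgeSet) = G.edgeSet

/-- In the forest `F` rooted at `v₀`, `u` is a child of `w`. -/
def SimpleGraph.IsChild {V : Type u} (F : SimpleGraph V) (v₀ u w : V) : Prop :=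
  F.Adj w u ∧ F.Reachable v₀ u ∧ F.dist v₀ u = F.dist v₀ w + 1

/-- The graph with edges `v_j v_i` for `v_i ∈ C j`, `j < i`. -/
def childGraph {V I : Type u} [LT I] (v : I ≃ V) (C : I → Set V) : SimpleGraph V :=
  SimpleGraph.fromEdgeSet {e | ∃ i j : I, j < i ∧ (v i : V) ∈ C j ∧ e = s(v j, v i)}

/-- Disjoint union of `ι`-many copies of `T`. -/
def copiesGraph (ι : Type u) {W : Type u} (T : SimpleGraph W) : SimpleGraph (ι × W) where
  Adj p q := p.1 = q.1 ∧ T.Adj p.2 q.2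
  symm := ⟨by rintro p q ⟨h1, h2⟩; exact ⟨h1.symm, h2.symm⟩⟩
  loopless := ⟨by rintro p ⟨-, h⟩; exact T.irrefl h⟩

namespace KonigAux
open Cardinal Set
attribute [local instance] Classical.propDecidable
variable {V : Type u} (G : SimpleGraph V) (κ : Cardinal.{u})

def ball (v : V) (n : ℕ) : Set V := {u | ∃ p : G.Walk u v, p.length ≤ n}

lemma mk_ball_le (hκ : ℵ₀ ≤ κ) (hreg : ∀ x : V, #(G.neighborSet x) = κ) (v : V) (n : ℕ) :
    #(ball G v n) ≤ κ := by
  induction n with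
  | zero =>
    have hsub : ball G v 0 ⊆ {v} := by
      rintro u ⟨p, hp⟩
      cases p with
      | nil => rfl
      | cons h q => simp at hp
    refine (mk_le_mk_of_subset hsub).trans ?_
    simpa using one_le_aleph0.trans hκ
  | succ n ih =>
    have hsub : ball G v (n+1) ⊆ {v} ∪ ⋃ w : ball G v n, G.neighborSet w.1 := by
      rintro u ⟨p, hp⟩
      cases p with
      | nil => exact Or.inl rfl
      | @cons _ w _ h q =>
        refine Or.inr (Set.mem_iUnion.mpr ⟨⟨w, q, ?_⟩, h.symm⟩)
        exact Nat.lt_succ_iff.mp (Nat.lt_of_lt_of_le (Nat.lt_succ_self _) hp)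
    refine (mk_le_mk_of_subset hsub).trans ((mk_union_le _ _).trans ?_)
    have h2 : #(⋃ w : ball G v n, G.neighborSet w.1) ≤ κ := by
      refine (mk_iUnion_le _).trans ?_
      have hs : ⨆ w : ball G v n, #(G.neighborSet w.1) ≤ κ := ciSup_le' fun w => (hreg w.1).le
      exact (mul_le_mul' ih hs).trans (mul_eq_self hκ).le
    have h1 : #({v} : Set V) ≤ κ := by simpa using one_le_aleph0.trans hκ
    exact (add_le_add h1 h2).trans (add_eq_self hκ).le

lemma mk_reachable_le (hκ : ℵ₀ ≤ κ) (hreg : ∀ x : V, #(G.neighborSet x) = κ) (v : V) :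
    #{u | G.Reachable u v} ≤ κ := by
  have hsub : {u | G.Reachable u v} ⊆ ⋃ n : ULift.{u} ℕ, ball G v n.down := by
    intro u hu
    obtain ⟨p⟩ := hu
    exact Set.mem_iUnion.mpr ⟨⟨p.length⟩, p, le_rfl⟩
  refine (mk_le_mk_of_subset hsub).trans ((mk_iUnion_le _).trans ?_)
  have hs : ⨆ n : ULift.{u} ℕ, #(ball G v n.down) ≤ κ :=
    ciSup_le' fun n => mk_ball_le G κ hκ hreg v n.down
  have hn : #(ULift.{u} ℕ) ≤ κ := by simpa using hκ
  exact (mul_le_mul' hn hs).trans (mul_eq_self hκ).le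

lemma mk_supp_le (hκ : ℵ₀ ≤ κ) (hreg : ∀ x : V, #(G.neighborSet x) = κ)
    (c : G.ConnectedComponent) : #(c.supp) ≤ κ := by
  obtain ⟨v, rfl⟩ := c.exists_rep
  have hsub : (G.connectedComponentMk v).supp ⊆ {u | G.Reachable u v} := by
    intro u hu
    exact SimpleGraph.ConnectedComponent.eq.mp hu
  exact (mk_le_mk_of_subset hsub).trans (mk_reachable_le G κ hκ hreg v)

lemma comp_eq_of_mem {e : Sym2 V} (he : e ∈ G.edgeSet) {a b : V} (ha : a ∈ e) (hb : b ∈ e) :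
    G.connectedComponentMk a = G.connectedComponentMk b := by
  induction e with
  | _ x y =>
    have hadj : G.Adj x y := he
    have hxy : G.connectedComponentMk x = G.connectedComponentMk y :=
      SimpleGraph.ConnectedComponent.eq.mpr hadj.reachable
    rcases Sym2.mem_iff.mp ha with rfl | rfl <;> rcases Sym2.mem_iff.mp hb with rfl | rfl <;>
      simp [hxy]

lemma sym2_out_eq (e : Sym2 V) : s(e.out.1, e.out.2) = e := by
  rw [Sym2.mk]; exact e.out_eq

abbrev Idx : Type u := κ.ord.ToType

def Task : Type u := G.edgeSet ⊕ (V × Idx κ)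

noncomputable def pcomp (p : Sym2 V × Idx κ) : G.ConnectedComponent :=
  G.connectedComponentMk p.1.out.1

noncomputable def taskComp : Task G κ → G.ConnectedComponent
  | .inl e => G.connectedComponentMk e.1.out.1
  | .inr vi => G.connectedComponentMk vi.1

lemma mk_fiber_le (hκ : ℵ₀ ≤ κ) (hreg : ∀ x : V, #(G.neighborSet x) = κ)
    (c : G.ConnectedComponent) : #{t : Task G κ // taskComp G κ t = c} ≤ κ := by
  have hsupp : #(c.supp) ≤ κ := mk_supp_le G κ hκ hreg c
  let f : {t : Task G κ // taskComp G κ t = c} → (c.supp × c.supp) ⊕ (c.supp × Idx κ) :=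
    fun t => match t with
    | ⟨.inl e, h⟩ => Sum.inl (⟨e.1.out.1, h⟩,
        ⟨e.1.out.2, show G.connectedComponentMk e.1.out.2 = c from
          (comp_eq_of_mem G e.2 (Sym2.out_snd_mem e.1) (Sym2.out_fst_mem e.1)).trans h⟩)
    | ⟨.inr vi, h⟩ => Sum.inr (⟨vi.1, h⟩, vi.2)
  have hf : Function.Injective f := by
    rintro ⟨t1, h1⟩ ⟨t2, h2⟩ heq
    rcases t1 with e1 | vi1 <;> rcases t2 with e2 | vi2 <;> simp only [f] at heq
    · simp only [Sum.inl.injEq, Prod.mk.injEq, Subtype.mk.injEq] at heq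
      have he : e1.1 = e2.1 := by
        rw [← sym2_out_eq e1.1, ← sym2_out_eq e2.1, Subtype.mk.inj heq.1, Subtype.mk.inj heq.2]
      exact Subtype.ext (congrArg Sum.inl (Subtype.ext he))
    · exact absurd heq (by simp)
    · exact absurd heq (by simp)
    · simp only [Sum.inr.injEq, Prod.mk.injEq, Subtype.mk.injEq] at heq
      exact Subtype.ext (congrArg Sum.inr (Prod.ext (Subtype.mk.inj heq.1) heq.2))
  refine (mk_le_of_injective hf).trans ?_
  have hmk : #((c.supp × c.supp) ⊕ (c.supp × Idx κ)) =
      #(c.supp) * #(c.supp) + #(c.supp) * #(Idx κ) := by simp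
  rw [hmk, mk_ord_toType]
  have h1 : #(c.supp) * #(c.supp) ≤ κ := (mul_le_mul' hsupp hsupp).trans (mul_eq_self hκ).le
  have h2 : #(c.supp) * κ ≤ κ := (mul_le_mul' hsupp le_rfl).trans (mul_eq_self hκ).le
  exact (add_le_add h1 h2).trans (add_eq_self hκ).le

lemma idx_nonempty (hκ : ℵ₀ ≤ κ) : Nonempty (Idx κ) := by
  have h0 : (0:Cardinal) < #(Idx κ) := by
    rw [mk_ord_toType]; exact aleph0_pos.trans_le hκ
  exact mk_ne_zero_iff.mp h0.ne'

noncomputable def kEmb (hκ : ℵ₀ ≤ κ) (hreg : ∀ x : V, #(G.neighborSet x) = κ)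
    (c : G.ConnectedComponent) : {t : Task G κ // taskComp G κ t = c} ↪ Idx κ :=
  ((Cardinal.le_def _ _).mp ((mk_fiber_le G κ hκ hreg c).trans_eq (mk_ord_toType κ).symm)).some

noncomputable def kInj (hκ : ℵ₀ ≤ κ) (hreg : ∀ x : V, #(G.neighborSet x) = κ)
    (c : G.ConnectedComponent) : Task G κ → Idx κ := fun t =>
  if h : taskComp G κ t = c then kEmb G κ hκ hreg c ⟨t, h⟩
  else (idx_nonempty κ hκ).some

lemma kInj_injOn (hκ : ℵ₀ ≤ κ) (hreg : ∀ x : V, #(G.neighborSet x) = κ)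
    (c : G.ConnectedComponent) :
    Set.InjOn (kInj G κ hκ hreg c) {t | taskComp G κ t = c} := by
  intro t1 h1 t2 h2 h
  have h1' : taskComp G κ t1 = c := h1
  have h2' : taskComp G κ t2 = c := h2
  simp only [kInj] at h
  rw [dif_pos h1', dif_pos h2'] at h
  exact congrArg Subtype.val ((kEmb G κ hκ hreg c).injective h)

noncomputable def encode (hκ : ℵ₀ ≤ κ) (hreg : ∀ x : V, #(G.neighborSet x) = κ) :
    Task G κ → Idx κ × G.ConnectedComponent :=
  fun t => (kInj G κ hκ hreg (taskComp G κ t) t, taskComp G κ t)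

lemma encode_injective (hκ : ℵ₀ ≤ κ) (hreg : ∀ x : V, #(G.neighborSet x) = κ) :
    Function.Injective (encode G κ hκ hreg) := by
  intro t1 t2 h
  have hc : taskComp G κ t1 = taskComp G κ t2 := congrArg Prod.snd h
  have h1 : kInj G κ hκ hreg (taskComp G κ t2) t1 = kInj G κ hκ hreg (taskComp G κ t2) t2 := by
    have h2 := congrArg Prod.fst h
    simp only [encode] at h2
    rw [← hc] at h2 ⊢
    exact h2
  exact kInj_injOn G κ hκ hreg (taskComp G κ t2) hc rfl h1

lemma encode_snd (hκ : ℵ₀ ≤ κ) (hreg : ∀ x : V, #(G.neighborSet x) = κ) (t : Task G κ) :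
    (encode G κ hκ hreg t).2 = taskComp G κ t := rfl

lemma partialInv_some {α β : Type*} {f : α → β} {a : α} {b : β}
    (h : Function.partialInv f b = some a) : f a = b := by
  unfold Function.partialInv at h
  split at h
  · cases h
    exact Exists.choose_spec ‹∃ a, f a = b›
  · cases h

def relC : G.ConnectedComponent → G.ConnectedComponent → Prop := WellOrderingRel

instance : IsWellOrder G.ConnectedComponent (relC G) := WellOrderingRel.isWellOrder

def rel : (Idx κ × G.ConnectedComponent) → (Idx κ × G.ConnectedComponent) → Prop :=
  Prod.Lex (· < ·) (relC G)

lemma rel_wf : WellFounded (rel G κ) :=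
  WellFounded.prod_lex wellFounded_lt IsWellFounded.wf

lemma rel_tri (α β : Idx κ × G.ConnectedComponent) : rel G κ α β ∨ α = β ∨ rel G κ β α := by
  obtain ⟨i, c⟩ := α; obtain ⟨j, d⟩ := β
  rcases lt_trichotomy i j with h | rfl | h
  · exact Or.inl (Prod.Lex.left _ _ h)
  · rcases trichotomous_of (relC G) c d with h | rfl | h
    · exact Or.inl (Prod.Lex.right _ h)
    · exact Or.inr (Or.inl rfl)
    · exact Or.inr (Or.inr (Prod.Lex.right _ h))
  · exact Or.inr (Or.inr (Prod.Lex.left _ _ h))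

def conf (p q : Sym2 V × Idx κ) : Prop :=
  p.1 = q.1 ∨ (p.2 = q.2 ∧ ∃ x, x ∈ p.1 ∧ x ∈ q.1)

lemma conf_comm {p q : Sym2 V × Idx κ} (h : conf κ p q) : conf κ q p := by
  rcases h with h | ⟨h1, x, h2, h3⟩
  · exact Or.inl h.symm
  · exact Or.inr ⟨h1.symm, x, h3, h2⟩

def valid (P : Set (Sym2 V × Idx κ)) (p : Sym2 V × Idx κ) : Prop :=
  p.1 ∈ G.edgeSet ∧ ∀ q ∈ P, ¬ conf κ p q

def sel : Task G κ → Set (Sym2 V × Idx κ)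
  | .inl e => {p | p.1 = e.1}
  | .inr vi => {p | p.2 = vi.2 ∧ vi.1 ∈ p.1}

noncomputable def step (P : Set (Sym2 V × Idx κ)) (ot : Option (Task G κ)) :
    Option (Sym2 V × Idx κ) :=
  match ot with
  | none => none
  | some t => if h : {p | valid G κ P p ∧ p ∈ sel G κ t}.Nonempty then some h.some else none

noncomputable def kf (hκ : ℵ₀ ≤ κ) (hreg : ∀ x : V, #(G.neighborSet x) = κ) :
    Idx κ × G.ConnectedComponent → Option (Sym2 V × Idx κ) :=
  (rel_wf G κ).fix fun α rec =>
    step G κ {p | ∃ β, ∃ h : rel G κ β α, rec β h = some p}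
      (Function.partialInv (encode G κ hκ hreg) α)

def Pset (hκ : ℵ₀ ≤ κ) (hreg : ∀ x : V, #(G.neighborSet x) = κ)
    (α : Idx κ × G.ConnectedComponent) : Set (Sym2 V × Idx κ) :=
  {p | ∃ β, ∃ _h : rel G κ β α, kf G κ hκ hreg β = some p}

lemma kf_eq (hκ : ℵ₀ ≤ κ) (hreg : ∀ x : V, #(G.neighborSet x) = κ)
    (α : Idx κ × G.ConnectedComponent) :
    kf G κ hκ hreg α = step G κ (Pset G κ hκ hreg α)
      (Function.partialInv (encode G κ hκ hreg) α) := by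
  rw [kf, WellFounded.fix_eq]
  rfl

lemma kf_some (hκ : ℵ₀ ≤ κ) (hreg : ∀ x : V, #(G.neighborSet x) = κ)
    {α : Idx κ × G.ConnectedComponent} {p : Sym2 V × Idx κ}
    (h : kf G κ hκ hreg α = some p) :
    valid G κ (Pset G κ hκ hreg α) p ∧
      ∃ t : Task G κ, encode G κ hκ hreg t = α ∧ p ∈ sel G κ t := by
  rw [kf_eq] at h
  rcases hot : Function.partialInv (encode G κ hκ hreg) α with _ | t <;> rw [hot] at h
  · cases h
  · unfold step at h
    dsimp only at h
    by_cases hne : {p | valid G κ (Pset G κ hκ hreg α) p ∧ p ∈ sel G κ t}.Nonempty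
    · rw [dif_pos hne] at h
      cases h
      have hm := hne.some_mem
      exact ⟨hm.1, t, partialInv_some hot, hm.2⟩
    · rw [dif_neg hne] at h
      cases h

variable (hκ : ℵ₀ ≤ κ) (hreg : ∀ x : V, #(G.neighborSet x) = κ)

lemma kf_task_some (t : Task G κ)
    (hne : {p | valid G κ (Pset G κ hκ hreg (encode G κ hκ hreg t)) p ∧ p ∈ sel G κ t}.Nonempty) :
    ∃ p, kf G κ hκ hreg (encode G κ hκ hreg t) = some p := by
  rw [kf_eq, Function.partialInv_left (encode_injective G κ hκ hreg) t]
  unfold step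
  dsimp only
  rw [dif_pos hne]
  exact ⟨hne.some, rfl⟩

lemma kf_edge {α : Idx κ × G.ConnectedComponent} {p : Sym2 V × Idx κ}
    (h : kf G κ hκ hreg α = some p) : p.1 ∈ G.edgeSet :=
  (kf_some G κ hκ hreg h).1.1

lemma kf_comp {α : Idx κ × G.ConnectedComponent} {p : Sym2 V × Idx κ}
    (h : kf G κ hκ hreg α = some p) : pcomp G κ p = α.2 := by
  obtain ⟨hval, t, het, hsel⟩ := kf_some G κ hκ hreg h
  have h2 : α.2 = taskComp G κ t := by rw [← het, encode_snd]
  rw [h2]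
  rcases t with e | vi
  · have : p.1 = e.1 := hsel
    unfold pcomp taskComp
    rw [this]
  · have hv : vi.1 ∈ p.1 := hsel.2
    unfold pcomp taskComp
    exact comp_eq_of_mem G hval.1 (Sym2.out_fst_mem p.1) hv

lemma kf_no_conf {α β : Idx κ × G.ConnectedComponent} {p q : Sym2 V × Idx κ}
    (hp : kf G κ hκ hreg α = some p) (hq : kf G κ hκ hreg β = some q)
    (hne : α ≠ β) : ¬ conf κ p q := by
  rcases rel_tri G κ α β with h | h | h
  · have : p ∈ Pset G κ hκ hreg β := ⟨α, h, hp⟩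
    intro hc
    exact (kf_some G κ hκ hreg hq).1.2 p this (conf_comm κ hc)
  · exact absurd h hne
  · have : q ∈ Pset G κ hκ hreg α := ⟨β, h, hq⟩
    exact (kf_some G κ hκ hreg hp).1.2 q this

/-- pairs in Pfull are equal or do not conflict -/
lemma pfull_eq_or_no_conf {p q : Sym2 V × Idx κ}
    (hp : ∃ α, kf G κ hκ hreg α = some p) (hq : ∃ β, kf G κ hκ hreg β = some q) :
    p = q ∨ ¬ conf κ p q := by
  obtain ⟨α, hp⟩ := hp; obtain ⟨β, hq⟩ := hq
  by_cases hab : α = β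
  · subst hab
    left
    rw [hp] at hq
    exact Option.some_injective _ hq
  · exact Or.inr (kf_no_conf G κ hκ hreg hp hq hab)

lemma mk_pset_comp_lt_aux (i : Idx κ) (c : G.ConnectedComponent) :
    #{q : Sym2 V × Idx κ | q ∈ Pset G κ hκ hreg (i, c) ∧ pcomp G κ q = c} < κ := by
  set Q := {q : Sym2 V × Idx κ | q ∈ Pset G κ hκ hreg (i, c) ∧ pcomp G κ q = c} with hQ
  have key : ∀ q : Q, ∃ j : Set.Iio i, kf G κ hκ hreg (j.1, c) = some q.1 := by
    rintro ⟨q, hq, hqc⟩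
    obtain ⟨β, hβrel, hβ⟩ := hq
    have hβ2 : β.2 = c := by rw [← kf_comp G κ hκ hreg hβ]; exact hqc.symm ▸ rfl
    have hβeq : β = (β.1, c) := by rw [← hβ2]
    have hlt : β.1 < i := by
      rw [hβeq] at hβrel
      cases hβrel with
      | left _ _ h => exact h
      | right _ h => exact absurd h (irrefl_of (relC G) c)
    refine ⟨⟨β.1, hlt⟩, ?_⟩
    rw [← hβeq]; exact hβ
  choose g hg using key
  have hginj : Function.Injective g := by
    intro q1 q2 h
    have h1 := hg q1
    have h2 := hg q2
    rw [h] at h1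
    rw [h1] at h2
    exact Subtype.ext (Option.some_injective _ h2.symm).symm
  calc #Q ≤ #(Set.Iio i) := mk_le_of_injective hginj
    _ < κ := mk_Iio_ord_toType i

lemma mk_pset_comp_lt (α : Idx κ × G.ConnectedComponent) :
    #{q : Sym2 V × Idx κ | q ∈ Pset G κ hκ hreg α ∧ pcomp G κ q = α.2} < κ := by
  obtain ⟨i, c⟩ := α
  exact mk_pset_comp_lt_aux G κ hκ hreg i c

lemma pset_edge {α : Idx κ × G.ConnectedComponent} {q : Sym2 V × Idx κ}
    (h : q ∈ Pset G κ hκ hreg α) : q.1 ∈ G.edgeSet := by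
  obtain ⟨β, _, hβ⟩ := h
  exact kf_edge G κ hκ hreg hβ

/-- T1: every edge gets colored -/
lemma task_edge (e : Sym2 V) (he : e ∈ G.edgeSet) :
    ∃ i : Idx κ, ∃ α, kf G κ hκ hreg α = some (e, i) := by
  set t : Task G κ := Sum.inl ⟨e, he⟩ with ht
  set α := encode G κ hκ hreg t with hα
  have hα2 : α.2 = G.connectedComponentMk e.out.1 := by
    rw [hα, encode_snd]; rfl
  by_cases hsome : ∃ p, kf G κ hκ hreg α = some p
  · obtain ⟨p, hp⟩ := hsome
    obtain ⟨-, t', het', hsel'⟩ := kf_some G κ hκ hreg hp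
    have htt : t' = t := encode_injective G κ hκ hreg (het'.trans hα)
    subst htt
    have hp1 : p.1 = e := hsel'
    refine ⟨p.2, α, ?_⟩
    rw [show (e, p.2) = p from Prod.ext hp1.symm rfl]
    exact hp
  by_cases hold : ∃ q ∈ Pset G κ hκ hreg α, q.1 = e
  · obtain ⟨q, hq, hq1⟩ := hold
    obtain ⟨β, -, hβ⟩ := hq
    exact ⟨q.2, β, by rw [show (e, q.2) = q from Prod.ext hq1.symm rfl]; exact hβ⟩
  exfalso
  apply hsome
  set Q := {q : Sym2 V × Idx κ | q ∈ Pset G κ hκ hreg α ∧ pcomp G κ q = α.2} with hQdef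
  have hQ : #Q < κ := mk_pset_comp_lt G κ hκ hreg α
  set B := {i : Idx κ | ∃ q ∈ Pset G κ hκ hreg α, q.2 = i ∧ ∃ x, x ∈ e ∧ x ∈ q.1} with hB
  have hBQ : #B < κ := by
    have key : ∀ i : B, ∃ q : Q, q.1.2 = i.1 := by
      rintro ⟨i, q, hq, hqi, x, hxe, hxq⟩
      refine ⟨⟨q, hq, ?_⟩, hqi⟩
      have hqe : q.1 ∈ G.edgeSet := pset_edge G κ hκ hreg hq
      have h1 : G.connectedComponentMk q.1.out.1 = G.connectedComponentMk x :=
        comp_eq_of_mem G hqe (Sym2.out_fst_mem q.1) hxq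
      have h2 : G.connectedComponentMk x = G.connectedComponentMk e.out.1 :=
        comp_eq_of_mem G he hxe (Sym2.out_fst_mem e)
      rw [hα2]; exact h1.trans h2
    choose g hg using key
    have hginj : Function.Injective g := by
      intro i1 i2 h
      have := (hg i1).symm.trans ((congrArg (fun q : Q => q.1.2) h).trans (hg i2))
      exact Subtype.ext this
    exact (mk_le_of_injective hginj).trans_lt hQ
  have hex : ∃ i : Idx κ, i ∉ B := by
    by_contra hc
    push_neg at hc
    have : #(Set.univ : Set (Idx κ)) ≤ #B := mk_le_mk_of_subset fun i _ => hc i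
    rw [mk_univ, mk_ord_toType] at this
    exact absurd (this.trans_lt hBQ) (lt_irrefl κ)
  obtain ⟨i, hi⟩ := hex
  have hval : valid G κ (Pset G κ hκ hreg α) (e, i) := by
    refine ⟨he, fun q hq hc => ?_⟩
    rcases hc with h1 | ⟨h2, x, hx1, hx2⟩
    · exact hold ⟨q, hq, h1.symm⟩
    · exact hi ⟨q, hq, h2.symm, x, hx1, hx2⟩
  obtain ⟨p, hp⟩ := kf_task_some G κ hκ hreg t ⟨(e, i), hval, rfl⟩
  exact ⟨p, hp⟩

/-- T2: every vertex sees every color -/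
lemma task_vertex (v : V) (i : Idx κ) :
    ∃ q : Sym2 V × Idx κ, (∃ α, kf G κ hκ hreg α = some q) ∧ q.2 = i ∧ v ∈ q.1 := by
  set t : Task G κ := Sum.inr (v, i) with ht
  set α := encode G κ hκ hreg t with hα
  have hα2 : α.2 = G.connectedComponentMk v := by rw [hα, encode_snd]; rfl
  by_cases hsome : ∃ p, kf G κ hκ hreg α = some p
  · obtain ⟨p, hp⟩ := hsome
    obtain ⟨-, t', het', hsel'⟩ := kf_some G κ hκ hreg hp
    have htt : t' = t := encode_injective G κ hκ hreg (het'.trans hα)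
    subst htt
    exact ⟨p, ⟨α, hp⟩, hsel'.1, hsel'.2⟩
  by_cases hold : ∃ q ∈ Pset G κ hκ hreg α, q.2 = i ∧ v ∈ q.1
  · obtain ⟨q, hq, hqi, hqv⟩ := hold
    obtain ⟨β, -, hβ⟩ := hq
    exact ⟨q, ⟨β, hβ⟩, hqi, hqv⟩
  exfalso
  apply hsome
  set Q := {q : Sym2 V × Idx κ | q ∈ Pset G κ hκ hreg α ∧ pcomp G κ q = α.2} with hQdef
  have hQ : #Q < κ := mk_pset_comp_lt G κ hκ hreg α
  -- membership in Q from touching v's component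
  have hmemQ : ∀ q ∈ Pset G κ hκ hreg α, ∀ x, x ∈ q.1 → G.Reachable x v → q ∈ Q := by
    intro q hq x hxq hreach
    refine ⟨hq, ?_⟩
    have hqe : q.1 ∈ G.edgeSet := pset_edge G κ hκ hreg hq
    have h1 : G.connectedComponentMk q.1.out.1 = G.connectedComponentMk x :=
      comp_eq_of_mem G hqe (Sym2.out_fst_mem q.1) hxq
    rw [hα2, pcomp, h1]
    exact SimpleGraph.ConnectedComponent.eq.mpr hreach
  set Bad1 := {w : V | ∃ q ∈ Pset G κ hκ hreg α, q.1 = s(v, w)} with hBad1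
  set Bad2 := {w : V | G.Adj v w ∧ ∃ q ∈ Pset G κ hκ hreg α, q.2 = i ∧ w ∈ q.1} with hBad2
  have hB1 : #Bad1 < κ := by
    have key : ∀ w : Bad1, ∃ q : Q, q.1.1 = s(v, w.1) := by
      rintro ⟨w, q, hq, hq1⟩
      refine ⟨⟨q, hmemQ q hq v (by rw [hq1]; exact Sym2.mem_mk_left v w) (SimpleGraph.Reachable.refl v)⟩, hq1⟩
    choose g hg using key
    have hginj : Function.Injective g := by
      intro w1 w2 h
      have h2 := (hg w1).symm.trans ((congrArg (fun q : Q => q.1.1) h).trans (hg w2))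
      exact Subtype.ext (Sym2.congr_right.mp h2)
    exact (mk_le_of_injective hginj).trans_lt hQ
  have hB2 : #Bad2 < κ := by
    have key : ∀ w : Bad2, ∃ q : Q, w.1 ∈ q.1.1 := by
      rintro ⟨w, hadj, q, hq, hqi, hwq⟩
      exact ⟨⟨q, hmemQ q hq w hwq hadj.symm.reachable⟩, hwq⟩
    choose g hg using key
    let g' : Bad2 → Q ⊕ Q := fun w =>
      if w.1 = (g w).1.1.out.1 then Sum.inl (g w) else Sum.inr (g w)
    have hginj : Function.Injective g' := by
      intro w1 w2 h
      simp only [g'] at h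
      by_cases h1 : (w1 : V) = (g w1).1.1.out.1 <;> by_cases h2 : (w2 : V) = (g w2).1.1.out.1
      · rw [if_pos h1, if_pos h2] at h
        have hq : g w1 = g w2 := Sum.inl.inj h
        exact Subtype.ext (h1.trans (by rw [hq, ← h2]))
      · rw [if_pos h1, if_neg h2] at h; exact absurd h (by simp)
      · rw [if_neg h1, if_pos h2] at h; exact absurd h (by simp)
      · rw [if_neg h1, if_neg h2] at h
        have hq : g w1 = g w2 := Sum.inr.inj h
        have hw1 : w1.1 = (g w1).1.1.out.2 := by
          have hm := hg w1
          rw [← sym2_out_eq (g w1).1.1, Sym2.mem_iff] at hm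
          exact hm.resolve_left h1
        have hw2 : w2.1 = (g w2).1.1.out.2 := by
          have hm := hg w2
          rw [← sym2_out_eq (g w2).1.1, Sym2.mem_iff] at hm
          exact hm.resolve_left h2
        exact Subtype.ext (hw1.trans (by rw [hq, ← hw2]))
    have := mk_le_of_injective hginj
    have hsum : #(Q ⊕ Q) < κ := by
      rw [mk_sum]
      simp only [lift_id]
      exact add_lt_of_lt hκ hQ hQ
    exact this.trans_lt hsum
  have hex : ∃ w, G.Adj v w ∧ w ∉ Bad1 ∧ w ∉ Bad2 := by
    by_contra hc
    push_neg at hc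
    have hsub : G.neighborSet v ⊆ Bad1 ∪ Bad2 := by
      intro w hw
      rcases Classical.em (w ∈ Bad1) with h | h
      · exact Or.inl h
      · exact Or.inr (hc w hw h)
    have : κ ≤ #(Bad1 ∪ Bad2 : Set V) := (hreg v).symm.trans_le (mk_le_mk_of_subset hsub)
    have h2 : #(Bad1 ∪ Bad2 : Set V) < κ := (mk_union_le _ _).trans_lt (add_lt_of_lt hκ hB1 hB2)
    exact absurd (this.trans_lt h2) (lt_irrefl κ)
  obtain ⟨w, hadj, hw1, hw2⟩ := hex
  have hval : valid G κ (Pset G κ hκ hreg α) (s(v, w), i) := by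
    refine ⟨hadj, fun q hq hc => ?_⟩
    rcases hc with h1 | ⟨h2, x, hx1, hx2⟩
    · exact hw1 ⟨q, hq, h1.symm⟩
    · rcases Sym2.mem_iff.mp hx1 with rfl | rfl
      · exact hold ⟨q, hq, h2.symm, hx2⟩
      · exact hw2 ⟨hadj, q, hq, h2.symm, hx2⟩
  obtain ⟨p, hp⟩ := kf_task_some G κ hκ hreg t ⟨(s(v, w), i), hval, rfl, Sym2.mem_mk_left v w⟩
  exact ⟨p, hp⟩

/-- the i-th perfect matching -/
noncomputable def kF (i : Idx κ) : SimpleGraph V where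
  Adj v w := ∃ α, kf G κ hκ hreg α = some (s(v, w), i)
  symm := ⟨by
    intro v w ⟨α, h⟩
    exact ⟨α, by rwa [Sym2.eq_swap]⟩⟩
  loopless := ⟨by
    intro v ⟨α, h⟩
    exact G.irrefl ((SimpleGraph.mem_edgeSet G).mp (kf_edge G κ hκ hreg h))⟩

lemma kF_edgeSet (i : Idx κ) (e : Sym2 V) :
    e ∈ (kF G κ hκ hreg i).edgeSet ↔ ∃ α, kf G κ hκ hreg α = some (e, i) := by
  induction e with
  | _ v w => exact Iff.rfl

theorem main (hκ : ℵ₀ ≤ κ) (hreg : ∀ x : V, #(G.neighborSet x) = κ) : ∃ (ι : Type u) (F : ι → SimpleGraph V), G.IsFactorization F ∧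
    ∀ i, ∀ v : V, ∃! w : V, (F i).Adj v w := by
  refine ⟨Idx κ, kF G κ hκ hreg, ⟨?_, ?_, ?_⟩, ?_⟩
  · -- F i ≤ G
    rintro i v w ⟨α, h⟩
    exact (SimpleGraph.mem_edgeSet G).mp (kf_edge G κ hκ hreg h)
  · -- pairwise disjoint
    intro i j hij
    rw [Set.disjoint_left]
    intro e hei hej
    rw [kF_edgeSet] at hei hej
    rcases pfull_eq_or_no_conf G κ hκ hreg hei hej with h | h
    · exact hij (congrArg Prod.snd h)
    · exact h (Or.inl rfl)
  · -- union of edge sets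
    ext e
    simp only [Set.mem_iUnion]
    constructor
    · rintro ⟨i, hi⟩
      rw [kF_edgeSet] at hi
      obtain ⟨α, h⟩ := hi
      exact kf_edge G κ hκ hreg h
    · intro he
      obtain ⟨i, α, h⟩ := task_edge G κ hκ hreg e he
      exact ⟨i, (kF_edgeSet G κ hκ hreg i e).mpr ⟨α, h⟩⟩
  · -- perfect matchings
    intro i v
    obtain ⟨q, hq, hqi, hqv⟩ := task_vertex G κ hκ hreg v i
    obtain ⟨w, hw⟩ := Sym2.mem_iff_exists.mp hqv
    have hqeq : q = (s(v, w), i) := Prod.ext hw hqi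
    rw [hqeq] at hq
    refine ⟨w, hq, ?_⟩
    intro w' hw'
    rcases pfull_eq_or_no_conf G κ hκ hreg hw' hq with h | h
    · have : s(v, w') = s(v, w) := congrArg Prod.fst h
      exact Sym2.congr_right.mp this
    · exact absurd (Or.inr ⟨rfl, v, Sym2.mem_mk_left v w', Sym2.mem_mk_left v w⟩) h

end KonigAux

/-- Kőnig 1936: every `κ`-regular graph (κ infinite) has a 1-factorization, i.e. a
decomposition of its edge set into perfect matchings. -/
theorem stmt_0 (κ : Cardinal.{u}) (hκ : ℵ₀ ≤ κ) {V : Type u} (G : SimpleGraph V)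
    (hreg : G.CardRegular κ) :
    ∃ (ι : Type u) (F : ι → SimpleGraph V), G.IsFactorization F ∧
      ∀ i, ∀ v : V, ∃! w : V, (F i).Adj v w := by
  exact KonigAux.main G κ hκ hreg
end

section
/- Let κ be an infinite cardinal and let G be a connected graph. Then G has a factorization into κ many κ-regular spanning forests (i.e., a family of κ edge-disjoint spanning subgraphs, each a κ-regular forest, whose union of edge sets is E(G)) if and only if G is κ-regular. -/
open Cardinal

universe u

open SimpleGraph


lemma acyclic_of_unique_down {V : Type u} [LinearOrder V] (H : SimpleGraph V)
    (hu : ∀ w x y : V, H.Adj x w → H.Adj y w → x < w → y < w → x = y) : H.IsAcyclic := by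
  classical
  intro v p hp
  have hne : p.support.toFinset.Nonempty := by
    simp [List.toFinset_nonempty_iff, SimpleGraph.Walk.support_ne_nil]
  set w := p.support.toFinset.max' hne with hwdef
  have hwmem : w ∈ p.support := by
    have := p.support.toFinset.max'_mem hne
    simpa using this
  have hmax : ∀ x ∈ p.support, x ≤ w := fun x hx =>
    p.support.toFinset.le_max' x (by simpa using hx)
  set q := p.rotate w hwmem with hqdef
  have hq : q.IsCycle := hp.rotate hwmem
  have hqmax : ∀ x ∈ q.support, x ≤ w := by
    intro x hx
    rw [Walk.support_eq_cons] at hx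
    rcases List.mem_cons.mp hx with hx' | hx' 
    · exact le_of_eq hx'
    · have : x ∈ p.support.tail := (Walk.support_rotate p w hwmem).mem_iff.mp hx'
      exact hmax x (List.mem_of_mem_tail this)
  obtain ⟨x, h1, q', hq'⟩ := Walk.not_nil_iff.mp hq.not_nil
  obtain ⟨y, h2, r2, hr2⟩ := Walk.exists_eq_cons_of_ne h1.ne q'.reverse
  have hxmem : x ∈ q.support := by rw [hq']; simp [Walk.support_cons]
  have hymem : y ∈ q.support := by
    have hy1 : y ∈ q'.reverse.support := by rw [hr2]; simp [Walk.support_cons]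
    have hy2 : y ∈ q'.support := by rwa [Walk.support_reverse, List.mem_reverse] at hy1
    rw [hq']; simp [Walk.support_cons, hy2]
  have hx : x < w := lt_of_le_of_ne (hqmax x hxmem) h1.ne'
  have hy : y < w := lt_of_le_of_ne (hqmax y hymem) h2.ne'
  have hxy : x = y := hu w x y h1.symm h2.symm hx hy
  set t := r2.support.tail with htdef
  have hsupp : q'.support = t.reverse ++ [y, w] := by
    have h3 : q'.support = q'.reverse.support.reverse := by
      rw [Walk.support_reverse, List.reverse_reverse]
    rw [h3, hr2, Walk.support_cons, Walk.support_eq_cons r2]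
    simp only [List.reverse_cons, List.append_assoc, List.cons_append, List.nil_append, htdef]
  have hnodup : q'.support.Nodup := by
    have := hq.support_nodup
    rwa [hq', Walk.support_cons, List.tail_cons] at this
  have hhead : q'.support.head? = some x := by rw [Walk.support_eq_cons q']; rfl
  by_cases ht : t = []
  · -- q'.support = [y, w]: q' has length 1, so q has length 2 < 3
    rw [ht] at hsupp
    simp at hsupp
    have hlq' : q'.support.length = 2 := by rw [hsupp]; rfl
    rw [Walk.length_support] at hlq'
    have : q.length = 2 := by rw [hq']; simp; omega
    have := hq.three_le_length
    omega
  · have htr : t.reverse ≠ [] := by simpa using ht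
    have hxmem2 : x ∈ t.reverse := by
      rw [hsupp] at hhead
      rw [List.head?_append_of_ne_nil _ htr] at hhead
      exact List.mem_of_mem_head? hhead
    rw [hsupp] at hnodup
    have hdisj := List.disjoint_of_nodup_append hnodup
    exact hdisj hxmem2 (by rw [hxy]; simp)

section FactorizationConstruction


open Classical in
noncomputable def c2 {V : Type u} (κ : Cardinal.{u})
    [LinearOrder V] (j_ : κ.ord.ToType → V) (m_ : κ.ord.ToType → κ.ord.ToType)
    (hd : κ.ord.ToType → V) (emb : ∀ b : V, {a : V // a < b} → κ.ord.ToType)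
    (d : κ.ord.ToType) (a b : V) : κ.ord.ToType :=
  if hab : a < b then
    if hα : ∃ α, j_ α = a ∧ hd α = b then m_ hα.choose else emb b ⟨a, hab⟩
  else d

variable {V : Type u} {κ : Cardinal.{u}} {G : SimpleGraph V}
    [LinearOrder V] {j_ : κ.ord.ToType → V} {m_ : κ.ord.ToType → κ.ord.ToType}
    {hd : κ.ord.ToType → V} {emb : ∀ b : V, {a : V // a < b} → κ.ord.ToType}
    {d : κ.ord.ToType}

open Classical in
lemma c2_eq_of_lt {a b : V} (hab : a < b) :
    c2 κ j_ m_ hd emb d a b =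
      if hα : ∃ α, j_ α = a ∧ hd α = b then m_ hα.choose else emb b ⟨a, hab⟩ := by
  rw [c2, dif_pos hab]

lemma c2_inj (H3 : Function.Injective hd) (H4 : ∀ b, Function.Injective (emb b))
    (H5 : ∀ (b : V) (x : {a : V // a < b}) (α : κ.ord.ToType), hd α = b → m_ α ≠ emb b x)
    {b x y : V} (hx : x < b) (hy : y < b)
    (h : c2 κ j_ m_ hd emb d x b = c2 κ j_ m_ hd emb d y b) : x = y := by
  rw [c2_eq_of_lt hx, c2_eq_of_lt hy] at h
  by_cases h1 : ∃ α, j_ α = x ∧ hd α = b <;> by_cases h2 : ∃ α, j_ α = y ∧ hd α = b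
  · rw [dif_pos h1, dif_pos h2] at h
    have e1 := h1.choose_spec
    have e2 := h2.choose_spec
    have : h1.choose = h2.choose := H3 (e1.2.trans e2.2.symm)
    rw [← e1.1, ← e2.1, this]
  · rw [dif_pos h1, dif_neg h2] at h
    exact absurd h (H5 b ⟨y, hy⟩ h1.choose h1.choose_spec.2)
  · rw [dif_neg h1, dif_pos h2] at h
    exact absurd h.symm (H5 b ⟨x, hx⟩ h2.choose h2.choose_spec.2)
  · rw [dif_neg h1, dif_neg h2] at h
    exact Subtype.mk_eq_mk.mp (H4 b h)

lemma c2_task (H3 : Function.Injective hd) {α : κ.ord.ToType} (hlt : j_ α < hd α) :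
    c2 κ j_ m_ hd emb d (j_ α) (hd α) = m_ α := by
  rw [c2_eq_of_lt hlt]
  have h1 : ∃ β, j_ β = j_ α ∧ hd β = hd α := ⟨α, rfl, rfl⟩
  rw [dif_pos h1]
  have := h1.choose_spec
  rw [H3 this.2]

noncomputable def Fm {V : Type u} (κ : Cardinal.{u}) (G : SimpleGraph V)
    [LinearOrder V] (j_ : κ.ord.ToType → V) (m_ : κ.ord.ToType → κ.ord.ToType)
    (hd : κ.ord.ToType → V) (emb : ∀ b : V, {a : V // a < b} → κ.ord.ToType)
    (d : κ.ord.ToType) (m : κ.ord.ToType) : SimpleGraph V where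
  Adj a b := G.Adj a b ∧ ((a < b ∧ c2 κ j_ m_ hd emb d a b = m) ∨
    (b < a ∧ c2 κ j_ m_ hd emb d b a = m))
  symm := ⟨by
    rintro a b ⟨h, h2 | h2⟩
    · exact ⟨h.symm, Or.inr h2⟩
    · exact ⟨h.symm, Or.inl h2⟩⟩
  loopless := ⟨fun a h => G.irrefl h.1⟩






lemma Fm_le (m : κ.ord.ToType) : Fm κ G j_ m_ hd emb d m ≤ G := fun _ _ h => h.1

lemma Fm_color {m m' : κ.ord.ToType} {a b : V}
    (h : (Fm κ G j_ m_ hd emb d m).Adj a b) (h' : (Fm κ G j_ m_ hd emb d m').Adj a b) :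
    m = m' := by
  obtain ⟨-, h1 | h1⟩ := h <;> obtain ⟨-, h2 | h2⟩ := h'
  · exact h1.2.symm.trans h2.2
  · exact absurd h1.1 (asymm h2.1)
  · exact absurd h1.1 (asymm h2.1)
  · exact h1.2.symm.trans h2.2

lemma Fm_cover {a b : V} (h : G.Adj a b) (hab : a < b) :
    (Fm κ G j_ m_ hd emb d (c2 κ j_ m_ hd emb d a b)).Adj a b :=
  ⟨h, Or.inl ⟨hab, rfl⟩⟩

lemma Fm_acyclic (H3 : Function.Injective hd) (H4 : ∀ b, Function.Injective (emb b))
    (H5 : ∀ (b : V) (x : {a : V // a < b}) (α : κ.ord.ToType), hd α = b → m_ α ≠ emb b x)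
    (m : κ.ord.ToType) : (Fm κ G j_ m_ hd emb d m).IsAcyclic := by
  refine acyclic_of_unique_down _ fun w x y hx hy hxw hyw => ?_
  obtain ⟨-, h1 | h1⟩ := hx
  · obtain ⟨-, h2 | h2⟩ := hy
    · exact c2_inj H3 H4 H5 hxw hyw (h1.2.trans h2.2.symm)
    · exact absurd h2.1 (asymm hyw)
  · exact absurd h1.1 (asymm hxw)

lemma Fm_fiber (H1 : ∀ α, G.Adj (j_ α) (hd α)) (H2 : ∀ α, j_ α < hd α)
    (H3 : Function.Injective hd)
    (H6 : ∀ (j : V) (m : κ.ord.ToType), κ ≤ #{α : κ.ord.ToType | j_ α = j ∧ m_ α = m})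
    (j : V) (m : κ.ord.ToType) :
    κ ≤ #((Fm κ G j_ m_ hd emb d m).neighborSet j) := by
  have key : ∀ α : {α : κ.ord.ToType | j_ α = j ∧ m_ α = m},
      hd α.1 ∈ (Fm κ G j_ m_ hd emb d m).neighborSet j := by
    rintro ⟨α, hj, hm⟩
    show (Fm κ G j_ m_ hd emb d m).Adj j (hd α)
    rw [← hj, ← hm]
    exact ⟨H1 α, Or.inl ⟨H2 α, c2_task H3 (H2 α)⟩⟩
  refine (H6 j m).trans (mk_le_of_injective (f := fun α => ⟨hd α.1, key α⟩) ?_)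
  intro α β h
  exact Subtype.ext (H3 (congrArg Subtype.val h))

lemma exists_hd {V : Type u} [LinearOrder V] (κ : Cardinal.{u}) (G : SimpleGraph V) (j_ : κ.ord.ToType → V)
    (hup : ∀ (j : V) (S : Set V), #S < κ → ∃ w, (G.Adj j w ∧ j < w) ∧ w ∉ S) :
    ∃ hd : κ.ord.ToType → V,
      ∀ α, (G.Adj (j_ α) (hd α) ∧ j_ α < hd α) ∧ ∀ β, β < α → hd β ≠ hd α := by
  have wfK : WellFounded ((· < ·) : κ.ord.ToType → κ.ord.ToType → Prop) := wellFounded_lt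
  have pf : ∀ (α : κ.ord.ToType) (rec : ∀ β, β < α → V),
      #(Set.range fun b : Set.Iio α => rec b.1 b.2) < κ :=
    fun α rec => lt_of_le_of_lt mk_range_le (mk_Iio_ord_toType α)
  set F : ∀ α : κ.ord.ToType, (∀ β, β < α → V) → V :=
    fun α rec => (hup (j_ α) (Set.range fun b : Set.Iio α => rec b.1 b.2) (pf α rec)).choose
    with hF
  refine ⟨wfK.fix F, fun α => ?_⟩
  have heq := wfK.fix_eq F α
  have hs := (hup (j_ α) (Set.range fun b : Set.Iio α => wfK.fix F b.1)
    (pf α (fun β _ => wfK.fix F β))).choose_spec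
  rw [heq]
  refine ⟨hs.1, fun β hβ h => hs.2 ⟨⟨β, hβ⟩, h⟩⟩

lemma construction {V : Type u} [LinearOrder V] {κ : Cardinal.{u}} (hκ : ℵ₀ ≤ κ)
    {G : SimpleGraph V} (hreg : G.CardRegular κ)
    (hV : #V = κ) (hsmall : ∀ j : V, #({x : V | x < j} : Set V) < κ) :
    ∃ F : κ.ord.ToType → SimpleGraph V, G.IsFactorization F ∧
      ∀ m, (F m).IsAcyclic ∧ (F m).CardRegular κ := by
  classical
  have hK : #(κ.ord.ToType) = κ := mk_ord_toType κ
  have hκ0 : κ ≠ 0 := (aleph0_pos.trans_le hκ).ne'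
  haveI hne : Nonempty κ.ord.ToType := mk_ne_zero_iff.mp (by rw [hK]; exact hκ0)
  -- every vertex has κ many up-neighbours
  have hupS : ∀ j : V, κ ≤ #({w : V | G.Adj j w ∧ j < w} : Set V) := by
    intro j
    by_contra hlt
    push_neg at hlt
    have hdown : #({w : V | G.Adj j w ∧ w < j} : Set V) < κ :=
      (mk_le_mk_of_subset (fun w hw => hw.2)).trans_lt (hsmall j)
    have hsub : (G.neighborSet j : Set V) ⊆
        {w : V | G.Adj j w ∧ j < w} ∪ {w : V | G.Adj j w ∧ w < j} := by
      intro w hw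
      rcases lt_or_gt_of_ne (G.ne_of_adj hw) with h | h
      · exact Or.inl ⟨hw, h⟩
      · exact Or.inr ⟨hw, h⟩
    have := ((mk_le_mk_of_subset hsub).trans (mk_union_le _ _)).trans_lt
      (add_lt_of_lt hκ hlt hdown)
    rw [hreg j] at this
    exact this.false
  have hup : ∀ (j : V) (S : Set V), #S < κ → ∃ w, (G.Adj j w ∧ j < w) ∧ w ∉ S := by
    intro j S hS
    by_contra hcon
    push_neg at hcon
    have : ({w : V | G.Adj j w ∧ j < w} : Set V) ⊆ S := fun w hw => hcon w hw
    exact absurd ((hupS j).trans (mk_le_mk_of_subset this)) hS.not_ge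
  -- the task enumeration
  have htriple : #(κ.ord.ToType) = #(V × κ.ord.ToType × κ.ord.ToType) := by
    simp only [mk_prod, lift_id, hV, hK]
    rw [mul_eq_self hκ, mul_eq_self hκ]
  obtain ⟨τ⟩ := Cardinal.eq.mp htriple
  set j_ : κ.ord.ToType → V := fun α => (τ α).1 with hj_
  set m_ : κ.ord.ToType → κ.ord.ToType := fun α => (τ α).2.1 with hm_
  obtain ⟨hd, hdspec⟩ := exists_hd κ G j_ hup
  have H1 : ∀ α, G.Adj (j_ α) (hd α) := fun α => (hdspec α).1.1
  have H2 : ∀ α, j_ α < hd α := fun α => (hdspec α).1.2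
  have H3 : Function.Injective hd := by
    intro α β h
    rcases lt_trichotomy α β with h' | h' | h'
    · exact absurd h ((hdspec β).2 α h')
    · exact h'
    · exact absurd h.symm ((hdspec α).2 β h')
  have H6 : ∀ (j : V) (m : κ.ord.ToType), κ ≤ #{α : κ.ord.ToType | j_ α = j ∧ m_ α = m} := by
    intro j m
    refine le_trans (le_of_eq hK.symm) (mk_le_of_injective (f := fun γ => ⟨τ.symm (j, m, γ), by simp [hj_, hm_]⟩) ?_)
    intro γ γ' h
    have h2 := congrArg (fun x => (τ x).2.2) (congrArg Subtype.val h)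
    simpa using h2
  -- the cleanup injections
  have usedSub : ∀ b : V, ({m : κ.ord.ToType | ∃ α, hd α = b ∧ m_ α = m}).Subsingleton := by
    rintro b m ⟨α, hα, hm⟩ m' ⟨α', hα', hm'⟩
    rw [← hm, ← hm', H3 (hα.trans hα'.symm)]
  have hcompl : ∀ b : V,
      κ ≤ #(({m : κ.ord.ToType | ∃ α, hd α = b ∧ m_ α = m}ᶜ : Set (κ.ord.ToType))) := by
    intro b
    by_contra h
    push_neg at h
    have h1 : #({m : κ.ord.ToType | ∃ α, hd α = b ∧ m_ α = m}) ≤ 1 :=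
      mk_le_one_iff_set_subsingleton.mpr (usedSub b)
    have h2 := mk_sum_compl ({m : κ.ord.ToType | ∃ α, hd α = b ∧ m_ α = m})
    rw [hK] at h2
    have h3 := add_lt_of_lt hκ (h1.trans_lt (one_lt_aleph0.trans_le hκ)) h
    rw [h2] at h3
    exact h3.false
  have embE : ∀ b : V, ∃ e : {a : V // a < b} → κ.ord.ToType, Function.Injective e ∧
      ∀ x : {a : V // a < b}, ¬∃ α, hd α = b ∧ m_ α = e x := by
    intro b
    obtain ⟨f⟩ := Cardinal.le_def _ _ |>.mp ((hsmall b).le.trans (hcompl b))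
    refine ⟨fun x => (f ⟨x.1, x.2⟩ : κ.ord.ToType), ?_, ?_⟩
    · intro x y h
      have := f.injective (Subtype.ext h)
      exact Subtype.ext (congrArg Subtype.val this)
    · exact fun x => (f ⟨x.1, x.2⟩).2
  choose emb H4 H5' using embE
  have H5 : ∀ (b : V) (x : {a : V // a < b}) (α : κ.ord.ToType), hd α = b → m_ α ≠ emb b x :=
    fun b x α hα h => H5' b x ⟨α, hα, h⟩
  obtain ⟨d⟩ := hne
  refine ⟨Fm κ G j_ m_ hd emb d, ⟨fun m => Fm_le m, ?_, ?_⟩,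
    fun m => ⟨Fm_acyclic H3 H4 H5 m, ?_⟩⟩
  · -- pairwise disjoint edge sets
    intro m m' hmm'
    rw [Set.disjoint_left]
    intro e
    induction e using Sym2.ind with
    | _ a b =>
      intro he he'
      exact hmm' (Fm_color ((mem_edgeSet _).mp he) ((mem_edgeSet _).mp he'))
  · -- union of edge sets
    apply Set.eq_of_subset_of_subset
    · exact Set.iUnion_subset fun m => edgeSet_mono (Fm_le m)
    · intro e
      induction e using Sym2.ind with
      | _ a b =>
        intro he
        rw [mem_edgeSet] at he
        rcases lt_or_gt_of_ne (G.ne_of_adj he) with h | h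
        · exact Set.mem_iUnion.mpr ⟨_, (mem_edgeSet _).mpr (Fm_cover he h)⟩
        · rw [Sym2.eq_swap]
          exact Set.mem_iUnion.mpr ⟨_, (mem_edgeSet _).mpr (Fm_cover he.symm h)⟩
  · -- regularity
    intro v
    refine le_antisymm ?_ (Fm_fiber H1 H2 H3 H6 v m)
    refine le_trans (mk_le_mk_of_subset ?_) (le_of_eq (hreg v))
    exact fun w hw => (Fm_le m) hw

end FactorizationConstruction

/-- A connected graph has a factorization into `κ` many `κ`-regular spanning forests
iff it is `κ`-regular. -/
theorem stmt_2 (κ : Cardinal.{u}) (hκ : ℵ₀ ≤ κ) {V : Type u} (G : SimpleGraph V)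
    (hconn : G.Connected) :
    (∃ F : κ.ord.ToType → SimpleGraph V, G.IsFactorization F ∧
      ∀ m, (F m).IsAcyclic ∧ (F m).CardRegular κ) ↔ G.CardRegular κ := by

  classical
  have hK : #(κ.ord.ToType) = κ := mk_ord_toType κ
  have hκ0 : κ ≠ 0 := (aleph0_pos.trans_le hκ).ne'
  haveI hne : Nonempty κ.ord.ToType := mk_ne_zero_iff.mp (by rw [hK]; exact hκ0)
  haveI : Nonempty V := hconn.nonempty
  constructor
  · rintro ⟨F, ⟨hle, hdisj, hunion⟩, hprop⟩ v
    refine le_antisymm ?_ ?_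
    · have hsub : (G.neighborSet v : Set V) ⊆ ⋃ m, (F m).neighborSet v := by
        intro w hw
        have h1 : s(v, w) ∈ G.edgeSet := (mem_edgeSet _).mpr hw
        rw [← hunion] at h1
        obtain ⟨_, ⟨m, rfl⟩, hm⟩ := h1
        exact Set.mem_iUnion.mpr ⟨m, (mem_edgeSet _).mp hm⟩
      refine (mk_le_mk_of_subset hsub).trans ?_
      refine (mk_iUnion_le _).trans ?_
      have heach : ∀ m, #((F m).neighborSet v) = κ := fun m => (hprop m).2 v
      simp only [heach, ciSup_const, hK, mul_eq_self hκ, le_refl]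
    · obtain ⟨m₀⟩ := hne
      rw [← (hprop m₀).2 v]
      exact mk_le_mk_of_subset fun w hw => (hle m₀) hw
  · intro hreg
    haveI : Infinite (κ.ord.ToType) := infinite_iff.mpr (by rw [hK]; exact hκ)
    set v₀ := Classical.arbitrary V with hv₀
    have neq : ∀ u : V, Nonempty (G.neighborSet u ≃ κ.ord.ToType) := fun u =>
      Cardinal.eq.mp ((hreg u).trans hK.symm)
    have eqv : ∀ u : V, G.neighborSet u ≃ κ.ord.ToType := fun u => (neq u).some
    set dec : List (κ.ord.ToType) → V :=
      fun l => l.foldr (fun a u => ((eqv u).symm a : V)) v₀ with hdec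
    have key : ∀ (u w : V) (p : G.Walk u w), (∃ l, dec l = u) → ∃ l', dec l' = w := by
      intro u w p
      induction p using SimpleGraph.Walk.concatRec with
      | Hnil => exact id
      | Hconcat p h ih =>
        rename_i x w'
        intro hu
        obtain ⟨l, hl⟩ := ih hu
        refine ⟨(eqv x ⟨w', h⟩) :: l, ?_⟩
        show ((eqv (dec l)).symm (eqv x ⟨w', h⟩) : V) = w'
        rw [hl]
        simp
    have hsurj : Function.Surjective dec := by
      intro w
      obtain ⟨p⟩ := hconn.preconnected v₀ w
      exact key v₀ w p ⟨[], rfl⟩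
    have hVle : #V ≤ κ := by
      have h1 := mk_le_of_surjective hsurj
      rwa [mk_list_eq_mk, hK] at h1
    have hVge : κ ≤ #V := (hreg v₀) ▸ mk_set_le _
    obtain ⟨vK⟩ : Nonempty (V ≃ κ.ord.ToType) :=
      Cardinal.eq.mp ((le_antisymm hVle hVge).trans hK.symm)
    letI : LinearOrder V := LinearOrder.lift' vK vK.injective
    have hsmall : ∀ j : V, #({x : V | x < j} : Set V) < κ := by
      intro j
      refine lt_of_le_of_lt (mk_le_of_injective
        (f := fun x : ({x : V | x < j} : Set V) => (⟨vK x.1, x.2⟩ : Set.Iio (vK j))) ?_)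
        (mk_Iio_ord_toType (vK j))
      intro x y h
      exact Subtype.ext (vK.injective (congrArg Subtype.val h))
    exact construction hκ hreg (le_antisymm hVle hVge) hsmall
end

section
/- Let κ be an infinite cardinal and let λ be a nonzero cardinal with λ ≤ κ. Then every connected κ-regular graph has a λ-factorization, i.e., a decomposition of its edge set into spanning λ-regular subgraphs. -/
open Cardinal

universe u

namespace Stmt6Aux

open Set SimpleGraph

variable {V ι O : Type u}

variable (G : SimpleGraph V) (lam : Cardinal.{u})

/-- neighbours of `v` joined to `v` by an `i`-coloured assigned edge. -/
def N (P : Set (Sym2 V × ι)) (v : V) (i : ι) : Set V := {w | G.Adj v w ∧ (s(v, w), i) ∈ P}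

def Unassigned (P : Set (Sym2 V × ι)) (e : Sym2 V) : Prop := ∀ j : ι, (e, j) ∉ P

open scoped Classical in
noncomputable def edgeDelta (P : Set (Sym2 V × ι)) (e : Sym2 V) : Set (Sym2 V × ι) :=
  if h : {i : ι | e ∈ G.edgeSet ∧ Unassigned P e ∧ ∀ x ∈ e, #(N G P x i) < lam}.Nonempty
  then {(e, h.choose)} else ∅

def cand (P : Set (Sym2 V × ι)) (v : V) (i : ι) : Set V :=
  {w | G.Adj v w ∧ Unassigned P s(v, w) ∧ #(N G P w i) < lam}

open scoped Classical in
noncomputable def batchDelta (P : Set (Sym2 V × ι)) (v : V) (i : ι) : Set (Sym2 V × ι) :=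
  if h : {W : Set V | W ⊆ cand G lam P v i ∧ #(N G P v i) + #W = lam}.Nonempty
  then (fun w => (s(v, w), i)) '' h.choose else ∅

noncomputable def delta (P : Set (Sym2 V × ι)) : Sym2 V ⊕ V × ι → Set (Sym2 V × ι)
  | Sum.inl e => edgeDelta G lam P e
  | Sum.inr vi => batchDelta G lam P vi.1 vi.2

theorem mem_edgeDelta {P : Set (Sym2 V × ι)} {e : Sym2 V} {p : Sym2 V × ι}
    (hp : p ∈ edgeDelta G lam P e) :
    p.1 = e ∧ e ∈ G.edgeSet ∧ Unassigned P e ∧ ∀ x ∈ e, #(N G P x p.2) < lam := by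
  rw [edgeDelta] at hp
  split at hp
  · rename_i h
    obtain ⟨h1, h2, h3⟩ := h.choose_spec
    cases Set.mem_singleton_iff.mp hp
    exact ⟨rfl, h1, h2, h3⟩
  · exact absurd hp (Set.notMem_empty _)

theorem edgeDelta_choose_mem {P : Set (Sym2 V × ι)} {e : Sym2 V}
    (hg : Set.Nonempty {i : ι | e ∈ G.edgeSet ∧ Unassigned P e ∧ ∀ x ∈ e, #(N G P x i) < lam}) :
    (e, hg.choose) ∈ edgeDelta G lam P e := by
  rw [edgeDelta, dif_pos hg]
  exact rfl

theorem edgeDelta_subsingleton {P : Set (Sym2 V × ι)} {e : Sym2 V} :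
    Set.Subsingleton (edgeDelta G lam P e) := by
  rw [edgeDelta]
  split
  · exact Set.subsingleton_singleton
  · exact Set.subsingleton_empty

theorem mem_batchDelta {P : Set (Sym2 V × ι)} {v : V} {i : ι} {p : Sym2 V × ι}
    (hp : p ∈ batchDelta G lam P v i) :
    p.2 = i ∧ ∃ w ∈ cand G lam P v i, p.1 = s(v, w) := by
  rw [batchDelta] at hp
  split at hp
  · rename_i h
    obtain ⟨w, hw, rfl⟩ := hp
    exact ⟨rfl, w, h.choose_spec.1 hw, rfl⟩
  · exact absurd hp (Set.notMem_empty _)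

theorem batchDelta_eq {P : Set (Sym2 V × ι)} {v : V} {i : ι}
    (h1 : #(N G P v i) ≤ lam) (h2 : lam ≤ #(cand G lam P v i)) :
    ∃ W, W ⊆ cand G lam P v i ∧ #(N G P v i) + #W = lam ∧
      batchDelta G lam P v i = (fun w => (s(v, w), i)) '' W := by
  obtain ⟨d, hd⟩ := exists_add_of_le h1
  have hdlam : d ≤ lam := by rw [hd]; exact le_add_self
  obtain ⟨W0, hW0s, hW0c⟩ := Cardinal.le_mk_iff_exists_subset.mp (hdlam.trans h2)
  have hne : Set.Nonempty {W : Set V | W ⊆ cand G lam P v i ∧ #(N G P v i) + #W = lam} :=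
    ⟨W0, hW0s, by rw [hW0c, ← hd]⟩
  exact ⟨hne.choose, hne.choose_spec.1, hne.choose_spec.2, by rw [batchDelta, dif_pos hne]⟩

theorem delta_unassigned {P : Set (Sym2 V × ι)} {t : Sym2 V ⊕ V × ι} {p : Sym2 V × ι}
    (hp : p ∈ delta G lam P t) : Unassigned P p.1 := by
  cases t with
  | inl e =>
    obtain ⟨h1, _, h3, _⟩ := mem_edgeDelta G lam hp
    rw [h1]; exact h3
  | inr vi =>
    obtain ⟨_, w, hw, h1⟩ := mem_batchDelta G lam hp
    rw [h1]; exact hw.2.1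

theorem delta_edge {P : Set (Sym2 V × ι)} {t : Sym2 V ⊕ V × ι} {p : Sym2 V × ι}
    (hp : p ∈ delta G lam P t) : p.1 ∈ G.edgeSet := by
  cases t with
  | inl e =>
    obtain ⟨h1, h2, _, _⟩ := mem_edgeDelta G lam hp
    rw [h1]; exact h2
  | inr vi =>
    obtain ⟨_, w, hw, h1⟩ := mem_batchDelta G lam hp
    rw [h1]; exact hw.1

theorem delta_card (hlam0 : lam ≠ 0) (P : Set (Sym2 V × ι)) (t : Sym2 V ⊕ V × ι) :
    #(delta G lam P t) ≤ lam := by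
  cases t with
  | inl e =>
    show #(edgeDelta G lam P e) ≤ lam
    rw [edgeDelta]
    split
    · simpa using Cardinal.one_le_iff_ne_zero.mpr hlam0
    · simp
  | inr vi =>
    show #(batchDelta G lam P vi.1 vi.2) ≤ lam
    rw [batchDelta]
    split
    · rename_i h
      refine le_trans Cardinal.mk_image_le ?_
      calc #h.choose ≤ #(N G P vi.1 vi.2) + #h.choose := le_add_self
        _ = lam := h.choose_spec.2
    · simp

section
variable [LinearOrder O] [WellFoundedLT O] (σ : O → Sym2 V ⊕ V × ι)

noncomputable def stage : O → Set (Sym2 V × ι) :=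
  (wellFounded_lt (α := O)).fix fun o ih =>
    (⋃ o' : Iio o, ih o'.1 o'.2) ∪ delta G lam (⋃ o' : Iio o, ih o'.1 o'.2) (σ o)

noncomputable def priorSet (o : O) : Set (Sym2 V × ι) := ⋃ o' : Iio o, stage G lam σ o'.1

theorem stage_eq (o : O) :
    stage G lam σ o = priorSet G lam σ o ∪ delta G lam (priorSet G lam σ o) (σ o) := by
  unfold priorSet
  conv_lhs => rw [stage, WellFounded.fix_eq]
  rfl

theorem stage_subset_priorSet {o' o : O} (h : o' < o) :
    stage G lam σ o' ⊆ priorSet G lam σ o :=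
  Set.subset_iUnion (fun o'' : Iio o => stage G lam σ o''.1) ⟨o', h⟩

theorem priorSet_subset_stage (o : O) : priorSet G lam σ o ⊆ stage G lam σ o := by
  rw [stage_eq]; exact Set.subset_union_left

theorem stage_mono {o' o : O} (h : o' ≤ o) : stage G lam σ o' ⊆ stage G lam σ o := by
  rcases eq_or_lt_of_le h with rfl | h
  · exact subset_rfl
  · exact (stage_subset_priorSet G lam σ h).trans (priorSet_subset_stage G lam σ o)

theorem stage_subset_iUnion_delta (o : O) :
    stage G lam σ o ⊆ ⋃ o' : Iic o, delta G lam (priorSet G lam σ o'.1) (σ o'.1) := by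
  induction o using WellFoundedLT.induction with
  | _ o ih =>
    rw [stage_eq]
    apply Set.union_subset
    · refine Set.iUnion_subset fun o' => (ih o'.1 o'.2).trans (Set.iUnion_subset fun o'' => ?_)
      exact Set.subset_iUnion_of_subset ⟨o''.1, le_trans o''.2 (le_of_lt o'.2)⟩ subset_rfl
    · exact Set.subset_iUnion_of_subset ⟨o, le_refl o⟩ subset_rfl

variable {κ : Cardinal.{u}}

theorem priorSet_card (hκ : ℵ₀ ≤ κ) (hlam0 : lam ≠ 0) (hlamκ : lam < κ)
    (hO : ∀ o : O, #(Iio o) < κ) (o : O) : #(priorSet G lam σ o) < κ := by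
  have h1 : priorSet G lam σ o ⊆ ⋃ o' : Iio o, delta G lam (priorSet G lam σ o'.1) (σ o'.1) := by
    refine Set.iUnion_subset fun o' => (stage_subset_iUnion_delta G lam σ o'.1).trans
      (Set.iUnion_subset fun o'' => ?_)
    exact Set.subset_iUnion_of_subset ⟨o''.1, lt_of_le_of_lt o''.2 o'.2⟩ subset_rfl
  calc #(priorSet G lam σ o)
      ≤ #(⋃ o' : Iio o, delta G lam (priorSet G lam σ o'.1) (σ o'.1)) := mk_le_mk_of_subset h1
    _ ≤ #(Iio o) * ⨆ o' : Iio o, #(delta G lam (priorSet G lam σ o'.1) (σ o'.1)) :=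
        mk_iUnion_le _
    _ ≤ #(Iio o) * lam := by
        refine mul_le_mul_right (ciSup_le' fun o' => ?_) _
        exact delta_card G lam hlam0 _ _
    _ < κ := Cardinal.mul_lt_of_lt hκ (hO o) hlamκ

theorem stage_card (hκ : ℵ₀ ≤ κ) (hlam0 : lam ≠ 0) (hlamκ : lam < κ)
    (hO : ∀ o : O, #(Iio o) < κ) (o : O) : #(stage G lam σ o) < κ := by
  rw [stage_eq]
  refine lt_of_le_of_lt (Cardinal.mk_union_le _ _) ?_
  exact Cardinal.add_lt_of_lt hκ (priorSet_card G lam σ hκ hlam0 hlamκ hO o)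
    (lt_of_le_of_lt (delta_card G lam hlam0 _ _) hlamκ)

noncomputable def total : Set (Sym2 V × ι) := ⋃ o : O, stage G lam σ o

theorem stage_subset_total (o : O) : stage G lam σ o ⊆ total G lam σ :=
  Set.subset_iUnion (stage G lam σ) o

theorem priorSet_subset_total (o : O) : priorSet G lam σ o ⊆ total G lam σ :=
  (priorSet_subset_stage G lam σ o).trans (stage_subset_total G lam σ o)

theorem exists_min_stage {p : Sym2 V × ι} (hp : p ∈ total G lam σ) :
    ∃ o : O, p ∈ stage G lam σ o ∧ ∀ o', p ∈ stage G lam σ o' → o ≤ o' := by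
  obtain ⟨o1, ho1⟩ := Set.mem_iUnion.mp hp
  obtain ⟨o, ho, hmin⟩ := (wellFounded_lt (α := O)).has_min {o | p ∈ stage G lam σ o} ⟨o1, ho1⟩
  exact ⟨o, ho, fun o' h' => not_lt.mp (hmin o' h')⟩

theorem min_stage_delta {p : Sym2 V × ι} {o : O} (h1 : p ∈ stage G lam σ o)
    (h2 : ∀ o', p ∈ stage G lam σ o' → o ≤ o') :
    p ∈ delta G lam (priorSet G lam σ o) (σ o) ∧ p ∉ priorSet G lam σ o := by
  have hnp : p ∉ priorSet G lam σ o := by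
    intro hp
    obtain ⟨o', hp'⟩ := Set.mem_iUnion.mp hp
    exact absurd (h2 o'.1 hp') (not_le.mpr o'.2)
  rw [stage_eq] at h1
  exact ⟨h1.resolve_left hnp, hnp⟩

theorem total_edge {p : Sym2 V × ι} (hp : p ∈ total G lam σ) : p.1 ∈ G.edgeSet := by
  obtain ⟨o, h1, h2⟩ := exists_min_stage G lam σ hp
  exact delta_edge G lam (min_stage_delta G lam σ h1 h2).1

theorem total_func {e : Sym2 V} {i j : ι} (hi : (e, i) ∈ total G lam σ)
    (hj : (e, j) ∈ total G lam σ) : i = j := by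
  obtain ⟨oi, hi1, hi2⟩ := exists_min_stage G lam σ hi
  obtain ⟨oj, hj1, hj2⟩ := exists_min_stage G lam σ hj
  obtain ⟨hdi, _⟩ := min_stage_delta G lam σ hi1 hi2
  obtain ⟨hdj, _⟩ := min_stage_delta G lam σ hj1 hj2
  rcases lt_trichotomy oi oj with h | rfl | h
  · exact absurd ((stage_subset_priorSet G lam σ h) hi1)
      (delta_unassigned G lam hdj (j := i))
  · cases hσo : σ oi with
    | inl e' =>
      rw [hσo] at hdi hdj
      have := edgeDelta_subsingleton G lam hdi hdj
      exact (Prod.mk.injEq _ _ _ _ ▸ this).2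
    | inr vi =>
      rw [hσo] at hdi hdj
      obtain ⟨h1, -⟩ := mem_batchDelta G lam hdi
      obtain ⟨h2, -⟩ := mem_batchDelta G lam hdj
      exact h1.trans h2.symm
  · exact absurd ((stage_subset_priorSet G lam σ h) hj1)
      (delta_unassigned G lam hdi (j := j))

theorem delta_inl (P : Set (Sym2 V × ι)) (e : Sym2 V) :
    delta G lam P (Sum.inl e) = edgeDelta G lam P e := rfl

theorem delta_inr (P : Set (Sym2 V × ι)) (vi : V × ι) :
    delta G lam P (Sum.inr vi) = batchDelta G lam P vi.1 vi.2 := rfl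

theorem delta_cases {P : Set (Sym2 V × ι)} {t : Sym2 V ⊕ V × ι} {v w : V} {i : ι}
    (ht : t ≠ Sum.inr (v, i)) (hadj : G.Adj v w)
    (hp : (s(v, w), i) ∈ delta G lam P t) :
    #(N G P v i) < lam ∧ ∀ w', (s(v, w'), i) ∈ delta G lam P t → w' = w := by
  cases t with
  | inl e =>
    obtain ⟨h1, h2, h3, h4⟩ := mem_edgeDelta G lam hp
    constructor
    · have hv : v ∈ e := by rw [← h1]; exact Sym2.mem_mk_left v w
      exact h4 v hv
    · intro w' hp'
      obtain ⟨h1', -⟩ := mem_edgeDelta G lam hp'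
      have heq : s(v, w') = s(v, w) := h1'.trans h1.symm
      rcases Sym2.eq_iff.mp heq with ⟨-, h⟩ | ⟨h', -⟩
      · exact h
      · exact absurd h' (G.ne_of_adj hadj)
  | inr vi =>
    obtain ⟨hcol, u, hu, hedge⟩ := mem_batchDelta G lam hp
    have hcol' : i = vi.2 := hcol
    have hx : vi.1 ≠ v := by
      intro h
      exact ht (by rw [show vi = (v, i) from Prod.ext h hcol'.symm])
    have hwvi : w = vi.1 ∧ u = v := by
      rcases Sym2.eq_iff.mp hedge with ⟨hv1, hv2⟩ | ⟨hv1, hv2⟩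
      · exact absurd hv1.symm hx
      · exact ⟨hv2, hv1.symm⟩
    constructor
    · have hu' := hu.2.2
      rw [hwvi.2] at hu'
      rw [hcol']
      exact hu'
    · intro w' hp'
      obtain ⟨-, u', hu', hedge'⟩ := mem_batchDelta G lam hp'
      rcases Sym2.eq_iff.mp hedge' with ⟨hv1, -⟩ | ⟨-, hv2⟩
      · exact absurd hv1.symm hx
      · rw [hv2, hwvi.1]

theorem mk_mem_sym2_le (e : Sym2 V) : #{x | x ∈ e} ≤ 2 := by
  induction e using Sym2.inductionOn with
  | _ a b =>
    have h : {x | x ∈ s(a, b)} = {a, b} := Set.ext fun x => Sym2.mem_iff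
    rw [h]
    refine le_trans (Cardinal.mk_insert_le) ?_
    rw [Cardinal.mk_singleton]
    exact le_of_eq one_add_one_eq_two

theorem cand_card {κ : Cardinal.{u}} {P : Set (Sym2 V × ι)} {v : V}
    (hκ : ℵ₀ ≤ κ) (hlam0 : lam ≠ 0) (hlamκ : lam < κ) (hP : #P < κ)
    (hdeg : #(G.neighborSet v) = κ) (i : ι) : lam ≤ #(cand G lam P v i) := by
  classical
  set bad1 : Set V := {w | G.Adj v w ∧ ¬ Unassigned P s(v, w)} with hb1
  set bad2 : Set V := {w | G.Adj v w ∧ (N G P w i).Nonempty} with hb2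
  have hsub : G.neighborSet v ⊆ cand G lam P v i ∪ (bad1 ∪ bad2) := by
    intro w hw
    by_cases h1 : Unassigned P s(v, w)
    · by_cases h2 : #(N G P w i) < lam
      · exact Or.inl ⟨hw, h1, h2⟩
      · refine Or.inr (Or.inr ⟨hw, ?_⟩)
        rw [Set.nonempty_iff_ne_empty]
        intro hemp
        apply h2
        rw [hemp]
        simpa using pos_iff_ne_zero.mpr hlam0
    · exact Or.inr (Or.inl ⟨hw, h1⟩)
  have hbad1 : #bad1 ≤ #P := by
    have hch : ∀ w : bad1, ∃ p : Sym2 V × ι, p ∈ P ∧ p.1 = s(v, w.1) := by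
      rintro ⟨w, hadj, hw⟩
      simp only [Unassigned, not_forall, not_not] at hw
      obtain ⟨j, hj⟩ := hw
      exact ⟨(s(v, w), j), hj, rfl⟩
    choose F hF1 hF2 using hch
    refine Cardinal.mk_le_of_injective (f := fun w => (⟨F w, hF1 w⟩ : ↥P)) ?_
    intro a b hab
    have hFe : F a = F b := congrArg Subtype.val hab
    have he : s(v, a.1) = s(v, b.1) := by rw [← hF2 a, ← hF2 b, hFe]
    rcases Sym2.eq_iff.mp he with ⟨-, h⟩ | ⟨h1, h2⟩
    · exact Subtype.ext h
    · exact Subtype.ext (by rw [← h1, ← h2])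
  have hbad2 : #bad2 ≤ #P * 2 := by
    have hsub2 : bad2 ⊆ ⋃ q : ↥P, {x | x ∈ (q.1.1 : Sym2 V)} := by
      rintro w ⟨hadj, u, hu⟩
      exact Set.mem_iUnion.mpr ⟨⟨(s(w, u), i), hu.2⟩, Sym2.mem_mk_left w u⟩
    refine le_trans (mk_le_mk_of_subset hsub2) (le_trans (mk_iUnion_le _) ?_)
    exact mul_le_mul' le_rfl (ciSup_le' fun q => mk_mem_sym2_le _)
  have h2κ : (2 : Cardinal.{u}) < κ := lt_of_lt_of_le (by exact_mod_cast Cardinal.nat_lt_aleph0 2) hκ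
  have hbadc : #(bad1 ∪ bad2 : Set V) < κ :=
    lt_of_le_of_lt (Cardinal.mk_union_le _ _)
      (Cardinal.add_lt_of_lt hκ (lt_of_le_of_lt hbad1 hP)
        (lt_of_le_of_lt hbad2 (Cardinal.mul_lt_of_lt hκ hP h2κ)))
  have hκle : κ ≤ #(cand G lam P v i) + #(bad1 ∪ bad2 : Set V) := by
    rw [← hdeg]
    exact le_trans (mk_le_mk_of_subset hsub) (Cardinal.mk_union_le _ _)
  by_contra hcon
  push_neg at hcon
  exact absurd (lt_of_le_of_lt hκle (Cardinal.add_lt_of_lt hκ (lt_trans hcon hlamκ) hbadc))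
    (lt_irrefl κ)


theorem key {X O : Type u} [LinearOrder O] [WellFoundedLT O] {lam : Cardinal.{u}}
    (S : Set X) (f : X → O) (hinj : Set.InjOn f S)
    (hseg : ∀ s ∈ S, #{t : X | t ∈ S ∧ f t < f s} < lam) : #S ≤ lam := by
  by_contra hlt
  push_neg at hlt
  let r : ↥S → ↥S → Prop := fun a b => f a.1 < f b.1
  haveI h1 : IsTrichotomous ↥S r := by
    refine ⟨fun a b hab hba => ?_⟩
    rcases lt_trichotomy (f a.1) (f b.1) with h | h | h
    · exact absurd h hab
    · exact Subtype.ext (hinj a.2 b.2 h)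
    · exact absurd h hba
  haveI h2 : IsTrans ↥S r := ⟨fun a b c => lt_trans⟩
  haveI h3 : IsWellFounded ↥S r := ⟨InvImage.wf (fun a : ↥S => f a.1) wellFounded_lt⟩
  haveI hwo : IsWellOrder ↥S r := {}
  have htype : lam.ord < Ordinal.type r := by
    by_contra hle
    push_neg at hle
    have := (Ordinal.card_le_card hle).trans_eq (Cardinal.card_ord lam)
    rw [Ordinal.card_type] at this
    exact absurd this (not_le.mpr hlt)
  set s : ↥S := Ordinal.enum r ⟨lam.ord, htype⟩ with hs
  have he : Ordinal.typein r s = lam.ord := Ordinal.typein_enum r htype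
  have hcard : #{y : ↥S // r y s} = lam := by
    have hc := Ordinal.card_typein (r := r) s
    rw [he, Cardinal.card_ord] at hc
    exact hc.symm
  have h4 : lam ≤ #{t : X | t ∈ S ∧ f t < f s.1} := by
    rw [← hcard]
    refine Cardinal.mk_le_of_injective
      (f := fun y : {y : ↥S // r y s} => (⟨y.1.1, ⟨y.1.2, y.2⟩⟩ : {t : X | t ∈ S ∧ f t < f s.1}))
      ?_
    intro a b hab
    apply Subtype.ext; apply Subtype.ext
    have := congrArg Subtype.val hab
    simpa using this
  exact absurd (hseg s.1 s.2) (not_lt.mpr h4)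

theorem covers {κ : Cardinal.{u}} (hκ : ℵ₀ ≤ κ) (hlam0 : lam ≠ 0) (hlamκ : lam < κ)
    (hO : ∀ o : O, #(Iio o) < κ) (hι : κ ≤ #ι) (hσ : Function.Surjective σ)
    {e : Sym2 V} (he : e ∈ G.edgeSet) : ∃ i, (e, i) ∈ total G lam σ := by
  classical
  obtain ⟨o, ho⟩ := hσ (Sum.inl e)
  by_cases hun : Unassigned (priorSet G lam σ o) e
  · set P := priorSet G lam σ o with hPdef
    set bad : Set ι := {i | ¬ ∀ x ∈ e, #(N G P x i) < lam} with hbad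
    have hch : ∀ i : bad, ∃ p : Sym2 V × ι, p ∈ P ∧ p.2 = i.1 := by
      rintro ⟨i, hi⟩
      simp only [hbad, Set.mem_setOf_eq, not_forall] at hi
      obtain ⟨x, hx, hge⟩ := hi
      have hne : (N G P x i).Nonempty := by
        rw [Set.nonempty_iff_ne_empty]
        intro hemp
        apply hge
        rw [hemp]
        simpa using pos_iff_ne_zero.mpr hlam0
      obtain ⟨w, hw⟩ := hne
      exact ⟨(s(x, w), i), hw.2, rfl⟩
    choose F hF1 hF2 using hch
    have hbadc : #bad < κ := by
      refine lt_of_le_of_lt (Cardinal.mk_le_of_injective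
        (f := fun w => (⟨F w, hF1 w⟩ : ↥P)) ?_) (priorSet_card G lam σ hκ hlam0 hlamκ hO o)
      intro a b hab
      have : F a = F b := congrArg Subtype.val hab
      apply Subtype.ext
      rw [← hF2 a, ← hF2 b, this]
    have hgood : ∃ i : ι, i ∉ bad := by
      by_contra hcon
      push_neg at hcon
      have : bad = Set.univ := Set.eq_univ_of_forall hcon
      rw [this, Cardinal.mk_univ] at hbadc
      exact absurd (lt_of_le_of_lt hι hbadc) (lt_irrefl _)
    obtain ⟨i, hi⟩ := hgood
    have hi' : ∀ x ∈ e, #(N G P x i) < lam := by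
      by_contra hcon
      exact hi hcon
    have hg : Set.Nonempty {j : ι | e ∈ G.edgeSet ∧ Unassigned P e ∧
        ∀ x ∈ e, #(N G P x j) < lam} := ⟨i, he, hun, hi'⟩
    refine ⟨hg.choose, stage_subset_total G lam σ o ?_⟩
    rw [stage_eq]
    right
    rw [ho, delta_inl]
    exact edgeDelta_choose_mem G lam hg
  · simp only [Unassigned, not_forall, not_not] at hun
    obtain ⟨j, hj⟩ := hun
    exact ⟨j, priorSet_subset_total G lam σ o hj⟩

theorem total_degree [Nonempty O] {κ : Cardinal.{u}} (hκ : ℵ₀ ≤ κ) (hlam0 : lam ≠ 0)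
    (hlamκ : lam < κ) (hO : ∀ o : O, #(Iio o) < κ) (hσ : Function.Bijective σ)
    (hdeg : ∀ x : V, #(G.neighborSet x) = κ) (v : V) (i : ι) :
    #(N G (total G lam σ) v i) = lam := by
  classical
  have hfex : ∀ w : V, ∃ o : O, ((s(v, w), i) ∈ total G lam σ) →
      ((s(v, w), i) ∈ stage G lam σ o ∧ ∀ o', (s(v, w), i) ∈ stage G lam σ o' → o ≤ o') := by
    intro w
    by_cases h : (s(v, w), i) ∈ total G lam σ
    · obtain ⟨o, h1, h2⟩ := exists_min_stage G lam σ h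
      exact ⟨o, fun _ => ⟨h1, h2⟩⟩
    · exact ⟨Classical.arbitrary O, fun hc => absurd hc h⟩
  choose f hf using hfex
  obtain ⟨o₀, ho₀⟩ := hσ.surjective (Sum.inr (v, i))
  have hne_o₀ : ∀ o : O, o ≠ o₀ → σ o ≠ Sum.inr (v, i) := by
    intro o h hc
    exact h (hσ.injective (hc.trans ho₀.symm))
  set S : Set V := N G (total G lam σ) v i with hSdef
  set S₁ : Set V := {w | w ∈ S ∧ f w ≠ o₀} with hS₁def
  have hstep : ∀ w ∈ S₁, #(N G (priorSet G lam σ (f w)) v i) < lam ∧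
      ∀ w', (s(v, w'), i) ∈ delta G lam (priorSet G lam σ (f w)) (σ (f w)) → w' = w := by
    intro w hw
    obtain ⟨⟨hadj, hmem⟩, hfne⟩ := hw
    obtain ⟨hst, hmn⟩ := hf w hmem
    obtain ⟨hdel, -⟩ := min_stage_delta G lam σ hst hmn
    exact delta_cases G lam (hne_o₀ _ hfne) hadj hdel
  have hS₁c : #S₁ ≤ lam := by
    refine key S₁ f ?_ ?_
    · intro a ha b hb hab
      obtain ⟨hstb, hmnb⟩ := hf b hb.1.2
      obtain ⟨hdelb, -⟩ := min_stage_delta G lam σ hstb hmnb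
      rw [← hab] at hdelb
      exact ((hstep a ha).2 b hdelb).symm
    · intro w hw
      refine lt_of_le_of_lt (mk_le_mk_of_subset ?_) (hstep w hw).1
      rintro t ⟨ht, hlt⟩
      exact ⟨ht.1.1, stage_subset_priorSet G lam σ hlt (hf t ht.1.2).1⟩
  have hprior_sub : N G (priorSet G lam σ o₀) v i ⊆ S₁ := by
    rintro w ⟨hadj, hmem⟩
    have hmem' : (s(v, w), i) ∈ total G lam σ := priorSet_subset_total G lam σ o₀ hmem
    obtain ⟨o', ho'⟩ := Set.mem_iUnion.mp hmem
    exact ⟨⟨hadj, hmem'⟩, ne_of_lt (lt_of_le_of_lt ((hf w hmem').2 o'.1 ho') o'.2)⟩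
  have hc₀ : #(N G (priorSet G lam σ o₀) v i) ≤ lam :=
    le_trans (mk_le_mk_of_subset hprior_sub) hS₁c
  have hcand : lam ≤ #(cand G lam (priorSet G lam σ o₀) v i) :=
    cand_card G lam hκ hlam0 hlamκ (priorSet_card G lam σ hκ hlam0 hlamκ hO o₀) (hdeg v) i
  obtain ⟨W, hWsub, hWcard, hWeq⟩ := batchDelta_eq G lam hc₀ hcand
  have hstage₀ : stage G lam σ o₀ = priorSet G lam σ o₀ ∪ (fun w => (s(v, w), i)) '' W := by
    rw [stage_eq, ho₀, delta_inr, hWeq]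
  have hN₀ : N G (stage G lam σ o₀) v i = N G (priorSet G lam σ o₀) v i ∪ W := by
    ext w
    constructor
    · rintro ⟨hadj, hmem⟩
      rw [hstage₀] at hmem
      rcases hmem with h | h
      · exact Or.inl ⟨hadj, h⟩
      · obtain ⟨u, hu, he⟩ := h
        have heq : s(v, u) = s(v, w) := congrArg Prod.fst he
        rcases Sym2.eq_iff.mp heq with ⟨-, h'⟩ | ⟨h1, h2⟩
        · rw [← h']; exact Or.inr hu
        · exact absurd h1 (G.ne_of_adj hadj)
    · rintro (⟨hadj, hmem⟩ | hw)
      · exact ⟨hadj, by rw [hstage₀]; exact Or.inl hmem⟩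
      · exact ⟨(hWsub hw).1, by rw [hstage₀]; exact Or.inr ⟨w, hw, rfl⟩⟩
  have hdisj : Disjoint (N G (priorSet G lam σ o₀) v i) W := by
    rw [Set.disjoint_left]
    rintro w ⟨hadj, hmem⟩ hw
    exact (hWsub hw).2.1 i hmem
  have hcard₀ : #(N G (stage G lam σ o₀) v i) = lam := by
    rw [hN₀, Cardinal.mk_union_of_disjoint hdisj, hWcard]
  have hfin : S = N G (stage G lam σ o₀) v i := by
    apply Set.Subset.antisymm
    · intro w hw
      obtain ⟨hadj, hmem⟩ := hw
      rcases le_or_gt (f w) o₀ with hle | hgt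
      · exact ⟨hadj, stage_mono G lam σ hle (hf w hmem).1⟩
      · exfalso
        have hw1 : w ∈ S₁ := ⟨⟨hadj, hmem⟩, ne_of_gt hgt⟩
        have hsub₂ : N G (stage G lam σ o₀) v i ⊆ N G (priorSet G lam σ (f w)) v i := by
          rintro u ⟨ha, hm⟩
          exact ⟨ha, stage_subset_priorSet G lam σ hgt hm⟩
        have : lam ≤ #(N G (priorSet G lam σ (f w)) v i) :=
          le_trans hcard₀.symm.le (mk_le_mk_of_subset hsub₂)
        exact absurd (hstep w hw1).1 (not_lt.mpr this)
    · rintro w ⟨hadj, hmem⟩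
      exact ⟨hadj, stage_subset_total G lam σ o₀ hmem⟩
  rw [hfin]
  exact hcard₀

end

def balls {V : Type u} (G : SimpleGraph V) (v₀ : V) : ℕ → Set V
  | 0 => {v₀}
  | (n + 1) => balls G v₀ n ∪ ⋃ u : ↥(balls G v₀ n), G.neighborSet u.1

theorem mkV_le {V : Type u} (G : SimpleGraph V) {κ : Cardinal.{u}} (hκ : ℵ₀ ≤ κ)
    (hconn : G.Connected) (hreg : ∀ v : V, #(G.neighborSet v) ≤ κ) : #V ≤ κ := by
  classical
  obtain ⟨v₀⟩ := hconn.nonempty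
  have hwalk : ∀ (w : V) (q : G.Walk w v₀), w ∈ balls G v₀ q.length := by
    intro w q
    induction q with
    | nil => rw [SimpleGraph.Walk.length_nil, balls]; exact Set.mem_singleton _
    | @cons w u _ h q ih =>
      rw [SimpleGraph.Walk.length_cons, balls]
      exact Or.inr (Set.mem_iUnion.mpr ⟨⟨u, ih⟩, h.symm⟩)
  have hcard : ∀ n, #↥(balls G v₀ n) ≤ κ := by
    intro n
    induction n with
    | zero =>
      rw [balls, Cardinal.mk_singleton v₀]
      exact le_trans Cardinal.one_le_aleph0 hκ
    | succ n ih =>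
      rw [balls]
      refine le_trans (Cardinal.mk_union_le _ _) ?_
      have h2 : #↥(⋃ u : ↥(balls G v₀ n), G.neighborSet u.1) ≤ κ * κ :=
        le_trans (mk_iUnion_le _) (mul_le_mul' ih (ciSup_le' fun u => hreg u.1))
      calc #↥(balls G v₀ n) + #↥(⋃ u : ↥(balls G v₀ n), G.neighborSet u.1) ≤ κ + κ * κ :=
            add_le_add ih h2
        _ = κ + κ := by rw [Cardinal.mul_eq_self hκ]
        _ = κ := Cardinal.add_eq_self hκ
  have hcover : (Set.univ : Set V) ⊆ ⋃ n : ULift.{u} ℕ, balls G v₀ n.down := by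
    intro w _
    obtain ⟨q⟩ := hconn.preconnected w v₀
    exact Set.mem_iUnion.mpr ⟨ULift.up q.length, hwalk w q⟩
  calc #V = #↥(Set.univ : Set V) := (Cardinal.mk_univ).symm
    _ ≤ #↥(⋃ n : ULift.{u} ℕ, balls G v₀ n.down) := mk_le_mk_of_subset hcover
    _ ≤ #(ULift.{u} ℕ) * ⨆ n : ULift.{u} ℕ, #↥(balls G v₀ n.down) := mk_iUnion_le _
    _ ≤ ℵ₀ * κ := by
        rw [Cardinal.mk_uLift, Cardinal.mk_nat, Cardinal.lift_aleph0]
        exact mul_le_mul' le_rfl (ciSup_le' fun n => hcard n.down)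
    _ ≤ κ * κ := mul_le_mul' hκ le_rfl
    _ = κ := Cardinal.mul_eq_self hκ

end Stmt6Aux

/-- Every connected `κ`-regular graph has a `λ`-factorization for every nonzero `λ ≤ κ`. -/
theorem stmt_6 (κ lam : Cardinal.{u}) (hκ : ℵ₀ ≤ κ) (hlam0 : lam ≠ 0) (hlamκ : lam ≤ κ)
    {V : Type u} (G : SimpleGraph V) (hconn : G.Connected) (hreg : G.CardRegular κ) :
    ∃ (ι : Type u) (F : ι → SimpleGraph V), G.IsFactorization F ∧
      ∀ i, (F i).CardRegular lam := by
  classical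
  rcases eq_or_lt_of_le hlamκ with rfl | hlt
  · refine ⟨PUnit.{u + 1}, fun _ => G,
      ⟨fun _ => le_rfl, fun i j hij => absurd (Subsingleton.elim i j) hij, ?_⟩, fun _ => hreg⟩
    rw [Set.iUnion_const]
  · obtain ⟨v₀⟩ := hconn.nonempty
    have hVle : #V ≤ κ := Stmt6Aux.mkV_le G hκ hconn (fun v => le_of_eq (hreg v))
    have hVge : κ ≤ #V := by
      rw [← hreg v₀]
      exact le_trans (Cardinal.mk_le_mk_of_subset (Set.subset_univ _))
        (le_of_eq Cardinal.mk_univ)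
    have hV : #V = κ := le_antisymm hVle hVge
    set ι : Type u := κ.out with hιdef
    have hι : #ι = κ := Cardinal.mk_out κ
    have hVV : #(V × V) = κ := by
      rw [Cardinal.mk_prod, Cardinal.lift_id, hV, Cardinal.mul_eq_self hκ]
    have hSym2le : #(Sym2 V) ≤ κ := by
      rw [← hVV]
      exact Cardinal.mk_le_of_surjective
        (f := (fun p : V × V => s(p.1, p.2)))
        (fun z => Sym2.ind (f := fun z => ∃ p : V × V, s(p.1, p.2) = z) (fun a b => ⟨(a, b), rfl⟩) z)
    have hSym2ge : κ ≤ #(Sym2 V) := by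
      rw [← hreg v₀]
      refine Cardinal.mk_le_of_injective (f := fun w : ↥(G.neighborSet v₀) => s(v₀, w.1)) ?_
      intro a b hab
      rcases Sym2.eq_iff.mp hab with ⟨-, h⟩ | ⟨h1, -⟩
      · exact Subtype.ext h
      · exact absurd h1 (G.ne_of_adj b.2)
    have hSym2 : #(Sym2 V) = κ := le_antisymm hSym2le hSym2ge
    set O : Type u := κ.ord.ToType with hOdef
    have hOcard : #O = κ := by rw [hOdef, Cardinal.mk_toType, Cardinal.card_ord]
    haveI : Nonempty O := Cardinal.mk_ne_zero_iff.mp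
      (by rw [hOcard]; exact ne_of_gt (lt_of_lt_of_le Cardinal.aleph0_pos hκ))
    have hT : #O = #(Sym2 V ⊕ V × ι) := by
      rw [hOcard, Cardinal.mk_sum, Cardinal.mk_prod]
      simp only [Cardinal.lift_id]
      rw [hSym2, hV, hι, Cardinal.mul_eq_self hκ, Cardinal.add_eq_self hκ]
    obtain ⟨σe⟩ := Cardinal.eq.mp hT
    set σ : O → Sym2 V ⊕ V × ι := ⇑σe with hσdef
    have hσ : Function.Bijective σ := σe.bijective
    have hO : ∀ o : O, #(Set.Iio o) < κ := fun o => Cardinal.mk_Iio_ord_toType o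
    refine ⟨ι, fun i => SimpleGraph.fromEdgeSet {e | (e, i) ∈ Stmt6Aux.total G lam σ},
      ⟨?_, ?_, ?_⟩, ?_⟩
    · intro i a b hab
      obtain ⟨hm, hne⟩ := (SimpleGraph.fromEdgeSet_adj _).mp hab
      exact (G.mem_edgeSet).mp (Stmt6Aux.total_edge G lam σ hm)
    · intro i j hij
      rw [Set.disjoint_left]
      intro e hei hej
      rw [SimpleGraph.edgeSet_fromEdgeSet] at hei hej
      exact hij (Stmt6Aux.total_func G lam σ hei.1 hej.1)
    · ext e
      simp only [Set.mem_iUnion, SimpleGraph.edgeSet_fromEdgeSet, Set.mem_diff,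
        Set.mem_setOf_eq]
      constructor
      · rintro ⟨i, hi, -⟩
        exact Stmt6Aux.total_edge G lam σ hi
      · intro he
        obtain ⟨i, hi⟩ := Stmt6Aux.covers G lam σ hκ hlam0 hlt hO (le_of_eq hι.symm)
          hσ.surjective he
        exact ⟨i, hi, fun hd => (G.not_isDiag_of_mem_edgeSet he) hd⟩
    · intro i v
      have hNeq : (SimpleGraph.fromEdgeSet
          {e | (e, i) ∈ Stmt6Aux.total G lam σ}).neighborSet v
          = Stmt6Aux.N G (Stmt6Aux.total G lam σ) v i := by
        ext w
        simp only [SimpleGraph.mem_neighborSet, SimpleGraph.fromEdgeSet_adj, Set.mem_setOf_eq]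
        constructor
        · rintro ⟨hm, hne⟩
          exact ⟨(G.mem_edgeSet).mp (Stmt6Aux.total_edge G lam σ hm), hm⟩
        · rintro ⟨hadj, hm⟩
          exact ⟨hm, G.ne_of_adj hadj⟩
      show #↥((SimpleGraph.fromEdgeSet {e | (e, i) ∈ Stmt6Aux.total G lam σ}).neighborSet v)
        = lam
      rw [hNeq]
      exact Stmt6Aux.total_degree G lam σ hκ hlam0 hlt hO hσ hreg v i
end

section
/- Let κ be an infinite cardinal, and let T be a forest without isolated vertices having exactly κ components, each of order at most κ. Then T embeds as a spanning subgraph of the κ-regular tree. -/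
open Cardinal

universe u

namespace Stmt19


variable {V : Type u} {H : SimpleGraph V}

lemma end_of_mem_support_dist {x a b : V} (p : H.Walk x a) (hp : p.length ≤ H.dist x b)
    (hb : b ∈ p.support) : b = a := by
  classical
  have h1 := SimpleGraph.dist_le (p.takeUntil b hb)
  have h2 : (p.takeUntil b hb).length + (p.dropUntil b hb).length = p.length := by
    rw [← SimpleGraph.Walk.length_append, SimpleGraph.Walk.take_spec]
  have h3 : (p.dropUntil b hb).length = 0 := by omega
  exact SimpleGraph.Walk.eq_of_length_eq_zero h3

lemma adj_dist_ne (hac : H.IsAcyclic) {x a b : V} (hx : H.Reachable x a) (hab : H.Adj a b) :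
    H.dist x a ≠ H.dist x b := by
  intro he
  obtain ⟨p, hp, hplen⟩ := hx.exists_path_of_dist
  obtain ⟨q, hq, hqlen⟩ := (hx.trans hab.reachable).exists_path_of_dist
  have hbp : b ∉ p.support := by
    intro hb
    have := end_of_mem_support_dist p (by omega) hb
    exact hab.ne this.symm
  have hr : (SimpleGraph.Walk.cons hab.symm p.reverse).IsPath := by
    rw [SimpleGraph.Walk.cons_isPath_iff]
    exact ⟨hp.reverse, by simpa using hbp⟩
  have huniq := SimpleGraph.isAcyclic_iff_path_unique.mp hac
    (⟨_, hr⟩ : H.Path b x) (⟨q.reverse, hq.reverse⟩ : H.Path b x)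
  have hlen := congrArg (fun P : H.Path b x => P.1.length) huniq
  simp only [SimpleGraph.Walk.length_cons, SimpleGraph.Walk.length_reverse] at hlen
  omega

lemma parent_exists {x a : V} (hx : H.Reachable x a) (h : 0 < H.dist x a) :
    ∃ u, H.Adj u a ∧ H.dist x u + 1 = H.dist x a := by
  obtain ⟨p, hp, hplen⟩ := hx.exists_path_of_dist
  cases hpr : p.reverse with
  | nil =>
    exfalso
    have := congrArg SimpleGraph.Walk.length hpr
    simp only [SimpleGraph.Walk.length_reverse, SimpleGraph.Walk.length_nil] at this
    omega
  | @cons _ u _ hadj q =>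
    refine ⟨u, hadj.symm, ?_⟩
    have h1 : H.dist x u ≤ q.length := by
      have := SimpleGraph.dist_le q.reverse
      simpa using this
    have h2 : H.dist x a ≤ H.dist x u + 1 := by
      obtain ⟨r, hr, hrlen⟩ := (SimpleGraph.Walk.reachable q.reverse).exists_path_of_dist
      have := SimpleGraph.dist_le (SimpleGraph.Walk.concat r hadj.symm)
      rw [SimpleGraph.Walk.length_concat] at this
      omega
    have h3 : p.length = q.length + 1 := by
      have := congrArg SimpleGraph.Walk.length hpr
      simp only [SimpleGraph.Walk.length_reverse, SimpleGraph.Walk.length_cons] at this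
      omega
    omega

lemma parent_unique (hac : H.IsAcyclic) {x a u₁ u₂ : V} (hxa : H.Reachable x a)
    (h1 : H.Adj u₁ a) (h2 : H.Adj u₂ a)
    (d1 : H.dist x u₁ + 1 = H.dist x a) (d2 : H.dist x u₂ + 1 = H.dist x a) : u₁ = u₂ := by
  have key : ∀ u : V, H.Adj u a → H.dist x u + 1 = H.dist x a →
      ∃ (r : H.Walk a x), r.IsPath ∧ r.getVert 1 = u := by
    intro u hu du
    obtain ⟨p, hp, hplen⟩ := (hxa.trans hu.symm.reachable).exists_path_of_dist
    have hap : a ∉ p.support := by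
      intro ha
      have := end_of_mem_support_dist p (by omega) ha
      exact hu.ne' this
    refine ⟨SimpleGraph.Walk.cons hu.symm p.reverse, ?_, ?_⟩
    · rw [SimpleGraph.Walk.cons_isPath_iff]
      exact ⟨hp.reverse, by simpa using hap⟩
    · simp [SimpleGraph.Walk.getVert_cons_succ]
  obtain ⟨r₁, hr₁, hg₁⟩ := key u₁ h1 d1
  obtain ⟨r₂, hr₂, hg₂⟩ := key u₂ h2 d2
  have := SimpleGraph.isAcyclic_iff_path_unique.mp hac (⟨r₁, hr₁⟩ : H.Path a x) ⟨r₂, hr₂⟩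
  have : r₁ = r₂ := congrArg Subtype.val this
  rw [← hg₁, ← hg₂, this]

lemma adj_dist_cases (hac : H.IsAcyclic) {x a b : V} (hx : H.Reachable x a) (hab : H.Adj a b) :
    H.dist x b = H.dist x a + 1 ∨ H.dist x a = H.dist x b + 1 := by
  have hne := adj_dist_ne hac hx hab
  obtain ⟨p, hp, hplen⟩ := hx.exists_path_of_dist
  have h2 : H.dist x b ≤ H.dist x a + 1 := by
    have := SimpleGraph.dist_le (SimpleGraph.Walk.concat p hab)
    rw [SimpleGraph.Walk.length_concat] at this
    omega
  obtain ⟨q, hq, hqlen⟩ := (hx.trans hab.reachable).exists_path_of_dist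
  have h3 : H.dist x a ≤ H.dist x b + 1 := by
    have := SimpleGraph.dist_le (SimpleGraph.Walk.concat q hab.symm)
    rw [SimpleGraph.Walk.length_concat] at this
    omega
  omega


section Bside

variable {W : Type u} (T : SimpleGraph W)

/-- The component of a vertex. -/
noncomputable abbrev comp (w : W) : T.ConnectedComponent := T.connectedComponentMk w

/-- A chosen representative of each component. -/
noncomputable def rootI (i : T.ConnectedComponent) : W := i.out

lemma comp_rootI (i : T.ConnectedComponent) : comp T (rootI T i) = i := i.out_eq

/-- The root of the component of `w`. -/
noncomputable def rootW (w : W) : W := rootI T (comp T w)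

lemma reach_rootW (w : W) : T.Reachable (rootW T w) w := by
  have h : comp T (rootW T w) = comp T w := comp_rootI T (comp T w)
  exact (SimpleGraph.ConnectedComponent.eq).mp h

lemma rootW_eq_of_comp_eq {a b : W} (h : comp T a = comp T b) : rootW T a = rootW T b := by
  unfold rootW; rw [h]

lemma rootW_rootI (i : T.ConnectedComponent) : rootW T (rootI T i) = rootI T i := by
  unfold rootW; rw [comp_rootI]

/-- Depth of a vertex in its rooted component. -/
noncomputable def depth (w : W) : ℕ := T.dist (rootW T w) w

lemma depth_eq_zero_iff {w : W} : depth T w = 0 ↔ w = rootW T w := by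
  unfold depth
  rw [(reach_rootW T w).dist_eq_zero_iff, eq_comm]

lemma depth_rootI (i : T.ConnectedComponent) : depth T (rootI T i) = 0 := by
  rw [depth_eq_zero_iff, rootW_rootI]

lemma comp_eq_of_adj {a b : W} (h : T.Adj a b) : comp T a = comp T b :=
  SimpleGraph.ConnectedComponent.eq.mpr h.reachable

/-- The parent of a vertex of positive depth. -/
noncomputable def par (w : W) : W :=
  if h : 0 < depth T w then (parent_exists (reach_rootW T w) h).choose else w

lemma par_spec {w : W} (h : 0 < depth T w) :
    T.Adj (par T w) w ∧ depth T (par T w) + 1 = depth T w := by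
  unfold par
  rw [dif_pos h]
  obtain ⟨h1, h2⟩ := (parent_exists (reach_rootW T w) h).choose_spec
  refine ⟨h1, ?_⟩
  unfold depth
  rwa [rootW_eq_of_comp_eq T (comp_eq_of_adj T h1)]

lemma depth_par_lt {w : W} (h : 0 < depth T w) : depth T (par T w) < depth T w := by
  have := (par_spec T h).2; omega

/-- `z` is a child of `u`. -/
def childOf (u z : W) : Prop := T.Adj u z ∧ depth T z = depth T u + 1

lemma childOf_par {z : W} (h : 0 < depth T z) : childOf T (par T z) z := by
  obtain ⟨h1, h2⟩ := par_spec T h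
  exact ⟨h1, by omega⟩

lemma par_of_childOf (hac : T.IsAcyclic) {u z : W} (h : childOf T u z) : par T z = u := by
  obtain ⟨h1, h2⟩ := h
  have hz : 0 < depth T z := by omega
  obtain ⟨h3, h4⟩ := par_spec T hz
  have e1 : rootW T (par T z) = rootW T z := rootW_eq_of_comp_eq T (comp_eq_of_adj T h3)
  have e2 : rootW T u = rootW T z := rootW_eq_of_comp_eq T (comp_eq_of_adj T h1)
  refine parent_unique hac (reach_rootW T z) h3 h1 ?_ ?_
  · have h4' := h4
    unfold depth at h4'
    rw [e1] at h4'
    exact h4'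
  · have h5 : depth T u + 1 = depth T z := by omega
    unfold depth at h5
    rw [e2] at h5
    exact h5

/-- Address of a vertex within its component (letters in `W ⊕ W`, path to root). -/
noncomputable def addr (w : W) : List (W ⊕ W) :=
  if h : 0 < depth T w then Sum.inl w :: addr (par T w) else []
termination_by depth T w
decreasing_by exact depth_par_lt T h

lemma addr_of_depth_zero {w : W} (h : depth T w = 0) : addr T w = [] := by
  rw [addr, dif_neg (by omega)]

lemma addr_of_depth_pos {w : W} (h : 0 < depth T w) :
    addr T w = Sum.inl w :: addr T (par T w) := by
  rw [addr, dif_pos h]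

end Bside

section Cov

variable {W : Type u} (T : SimpleGraph W) [Infinite W]

/-- Positions of length `n+1` that are "fresh" w.r.t. a level-`n` covering `f`. -/
def FreshSet {n : ℕ} (f : {l : List (W ⊕ W) // l.length = n} → W) :
    Set {l : List (W ⊕ W) // l.length = n + 1} :=
  {m | ∀ z : W, m.1.head? = some (Sum.inl z) →
      ¬ childOf T (f ⟨m.1.tail, by simp [List.length_tail, m.2]⟩) z}

lemma not_fresh_exists {n : ℕ} {f : {l : List (W ⊕ W) // l.length = n} → W}
    {m : {l : List (W ⊕ W) // l.length = n + 1}} (h : m ∉ FreshSet T f) :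
    ∃ z : W, m.1.head? = some (Sum.inl z) ∧
      childOf T (f ⟨m.1.tail, by simp [List.length_tail, m.2]⟩) z := by
  simp only [FreshSet, Set.mem_setOf_eq] at h
  push_neg at h
  exact h

lemma freshSet_card {n : ℕ} (f : {l : List (W ⊕ W) // l.length = n} → W) :
    #(↥(FreshSet T f)) = #W := by
  apply le_antisymm
  · calc #(↥(FreshSet T f)) ≤ #{l : List (W ⊕ W) // l.length = n + 1} := mk_set_le _
    _ ≤ #(List (W ⊕ W)) := mk_subtype_le _
    _ = #(W ⊕ W) := mk_list_eq_mk _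
    _ = #W + #W := by simp [mk_sum]
    _ = #W := add_eq_self (aleph0_le_mk W)
  · have inj : Function.Injective (fun z : W =>
        (⟨⟨Sum.inr z :: List.replicate n (Sum.inr (Classical.arbitrary W)), by simp⟩,
          by intro z' hz'; simp at hz'⟩ : ↥(FreshSet T f))) := by
      intro a b hab
      have := congrArg (fun m : ↥(FreshSet T f) => m.1.1) hab
      simpa using this
    exact mk_le_of_injective inj

variable (E : T.ConnectedComponent ≃ Option (ULift.{u} ℕ × W))

/-- Choice of a bijection between fresh positions and `W`. -/
noncomputable def freshEquiv {n : ℕ} (f : {l : List (W ⊕ W) // l.length = n} → W) :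
    ↥(FreshSet T f) ≃ W :=
  Classical.choice (Cardinal.eq.mp (freshSet_card T f))

open Classical in
/-- One step of the covering construction. -/
noncomputable def lvlSucc {n : ℕ} (f : {l : List (W ⊕ W) // l.length = n} → W)
    (m : {l : List (W ⊕ W) // l.length = n + 1}) : W :=
  if h : m ∈ FreshSet T f then
    rootI T (E.symm (some (⟨n⟩, freshEquiv T f ⟨m, h⟩)))
  else (not_fresh_exists T h).choose

/-- The level-`n` covering function: which vertex of the forest sits at a given position. -/
noncomputable def lvl : (n : ℕ) → ({l : List (W ⊕ W) // l.length = n} → W)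
  | 0 => fun _ => rootI T (E.symm none)
  | n + 1 => fun m => lvlSucc T E (lvl n) m

lemma lvl_succ (n : ℕ) (m : {l : List (W ⊕ W) // l.length = n + 1}) :
    lvl T E (n + 1) m = lvlSucc T E (lvl T E n) m := by
  rw [lvl]

lemma lvl_zero (m : {l : List (W ⊕ W) // l.length = 0}) :
    lvl T E 0 m = rootI T (E.symm none) := rfl

lemma lvl_succ_fresh {n : ℕ} {m : {l : List (W ⊕ W) // l.length = n + 1}}
    (h : m ∈ FreshSet T (lvl T E n)) :
    lvl T E (n + 1) m = rootI T (E.symm (some (⟨n⟩, freshEquiv T (lvl T E n) ⟨m, h⟩))) := by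
  rw [lvl_succ, lvlSucc, dif_pos h]

lemma lvl_succ_child {n : ℕ} {m : {l : List (W ⊕ W) // l.length = n + 1}} {z : W}
    (hz : m.1.head? = some (Sum.inl z))
    (hc : childOf T (lvl T E n ⟨m.1.tail, by simp [List.length_tail, m.2]⟩) z) :
    lvl T E (n + 1) m = z := by
  have hnf : m ∉ FreshSet T (lvl T E n) := fun hf => hf z hz hc
  rw [lvl_succ, lvlSucc, dif_neg hnf]
  obtain ⟨hz', -⟩ := (not_fresh_exists T hnf).choose_spec
  exact Sum.inl.inj (Option.some.inj (hz'.symm.trans hz))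

/-- The vertex covering position `l`. -/
noncomputable def cov (l : List (W ⊕ W)) : W := lvl T E l.length ⟨l, rfl⟩

lemma cov_eq {l : List (W ⊕ W)} {n : ℕ} (h : l.length = n) :
    cov T E l = lvl T E n ⟨l, h⟩ := by subst h; rfl

/-- The position where the root of component `i` is placed. -/
noncomputable def posI (i : T.ConnectedComponent) : List (W ⊕ W) :=
  (E i).elim [] fun p => ((freshEquiv T (lvl T E p.1.down)).symm p.2).1.1

/-- The position of an arbitrary vertex. -/
noncomputable def posOf (w : W) : List (W ⊕ W) := addr T w ++ posI T E (comp T w)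

lemma posOf_rootI (i : T.ConnectedComponent) : posOf T E (rootI T i) = posI T E i := by
  unfold posOf
  rw [addr_of_depth_zero T (depth_rootI T i), comp_rootI, List.nil_append]

lemma cov_posI (i : T.ConnectedComponent) : cov T E (posI T E i) = rootI T i := by
  rcases hE : E i with - | ⟨n, z⟩
  · have h1 : posI T E i = [] := by rw [posI, hE]; rfl
    have h2 : E.symm none = i := by rw [← hE, Equiv.symm_apply_apply]
    rw [h1]
    show lvl T E 0 ⟨[], rfl⟩ = rootI T i
    rw [lvl_zero, h2]
  · set m := (freshEquiv T (lvl T E n.down)).symm z with hm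
    have h1 : posI T E i = m.1.1 := by rw [posI, hE]; rfl
    rw [h1, cov_eq T E (n := n.down + 1) m.1.2]
    have hsub : (⟨m.1.1, m.1.2⟩ : {l : List (W ⊕ W) // l.length = n.down + 1}) = m.1 := rfl
    rw [hsub, lvl_succ_fresh T E m.2]
    have h3 : (⟨m.1, m.2⟩ : ↥(FreshSet T (lvl T E n.down))) = m := rfl
    rw [h3, hm, Equiv.apply_symm_apply]
    have h4 : (⟨n.down⟩ : ULift.{u} ℕ) = n := rfl
    rw [h4, ← hE, Equiv.symm_apply_apply]

lemma posOf_childOf (hac : T.IsAcyclic) {u z : W} (h : childOf T u z) :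
    posOf T E z = Sum.inl z :: posOf T E u := by
  have hd : 0 < depth T z := by have := h.2; omega
  have hp : par T z = u := par_of_childOf T hac h
  have hcq : comp T u = comp T z := comp_eq_of_adj T h.1
  unfold posOf
  rw [addr_of_depth_pos T hd, hp, hcq, List.cons_append]

lemma cov_posOf (hac : T.IsAcyclic) (w : W) : cov T E (posOf T E w) = w := by
  suffices H : ∀ n w, depth T w = n → cov T E (posOf T E w) = w by
    exact H (depth T w) w rfl
  intro n
  induction n using Nat.strong_induction_on with
  | _ n IH =>
    intro w hw
    rcases Nat.eq_zero_or_pos (depth T w) with h0 | hpos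
    · have hroot : w = rootW T w := (depth_eq_zero_iff T).mp h0
      have : posOf T E w = posI T E (comp T w) := by
        unfold posOf
        rw [addr_of_depth_zero T h0, List.nil_append]
      rw [this, cov_posI]
      exact hroot.symm
    · have hchild : childOf T (par T w) w := childOf_par T hpos
      have hstep : posOf T E w = Sum.inl w :: posOf T E (par T w) :=
        posOf_childOf T E hac hchild
      rw [hstep]
      set l := posOf T E (par T w) with hl
      have hIH : cov T E l = par T w := by
        apply IH (depth T (par T w)) _ (par T w) rfl
        have := depth_par_lt T hpos
        omega
      rw [cov_eq T E (n := l.length + 1) (by simp)]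
      apply lvl_succ_child T E (z := w)
      · rfl
      · have htl : (⟨(Sum.inl w :: l).tail, by simp [List.length_tail]⟩ :
            {l' : List (W ⊕ W) // l'.length = l.length}) = ⟨l, rfl⟩ := rfl
        rw [htl, ← cov_eq T E rfl, hIH]
        exact hchild

lemma posOf_cov (hac : T.IsAcyclic) (l : List (W ⊕ W)) : posOf T E (cov T E l) = l := by
  suffices H : ∀ n l, List.length l = n → posOf T E (cov T E l) = l by
    exact H l.length l rfl
  intro n
  induction n using Nat.strong_induction_on with
  | _ n IH =>
    intro l hl
    match l with
    | [] =>
      have h1 : cov T E [] = rootI T (E.symm none) := by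
        rw [cov_eq T E (l := ([] : List (W ⊕ W))) (n := 0) rfl, lvl_zero]
      rw [h1, posOf_rootI]
      rw [posI, Equiv.apply_symm_apply]
      rfl
    | k :: l' =>
      set n' := l'.length with hn'
      have hcl : cov T E (k :: l') = lvl T E (n' + 1) ⟨k :: l', by simp [hn']⟩ :=
        cov_eq T E (by simp [hn'])
      by_cases hf : (⟨k :: l', by simp [hn']⟩ : {l : List (W ⊕ W) // l.length = n' + 1}) ∈
          FreshSet T (lvl T E n')
      · rw [hcl, lvl_succ_fresh T E hf, posOf_rootI]
        rw [posI, Equiv.apply_symm_apply]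
        show ((freshEquiv T (lvl T E n')).symm
          (freshEquiv T (lvl T E n') ⟨⟨k :: l', by simp [hn']⟩, hf⟩)).1.1 = k :: l'
        rw [Equiv.symm_apply_apply]
      · obtain ⟨z, hz, hc⟩ := not_fresh_exists T hf
        have hcov : cov T E (k :: l') = z := by
          rw [hcl]
          exact lvl_succ_child T E hz hc
        have hk : k = Sum.inl z := by
          simpa using hz
        have hu : (⟨(k :: l' : List (W ⊕ W)).tail, by simp [List.length_tail, hn']⟩ :
            {m : List (W ⊕ W) // m.length = n'}) = ⟨l', rfl⟩ := rfl
        rw [hu] at hc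
        have hc' : childOf T (cov T E l') z := by
          rwa [← cov_eq T E rfl] at hc
        rw [hcov, posOf_childOf T E hac hc', IH n' (by have h5 : l'.length + 1 = n := (by simpa using hl); rw [hn']; omega) l' rfl, hk]

/-- The final bijection between the forest's vertices and positions. -/
noncomputable def equivB (hac : T.IsAcyclic) : W ≃ List (W ⊕ W) :=
  ⟨posOf T E, cov T E, fun w => cov_posOf T E hac w, fun l => posOf_cov T E hac l⟩

lemma equivB_adj (hac : T.IsAcyclic) {a b : W} (h : T.Adj a b) :
    equivB T E hac b = Sum.inl b :: equivB T E hac a ∨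
    equivB T E hac a = Sum.inl a :: equivB T E hac b := by
  have hr : rootW T a = rootW T b := rootW_eq_of_comp_eq T (comp_eq_of_adj T h)
  have hda : depth T b = depth T a + 1 ∨ depth T a = depth T b + 1 := by
    have key := adj_dist_cases hac (reach_rootW T a) h
    unfold depth
    rw [← hr]
    exact key
  rcases hda with h1 | h1
  · exact Or.inl (posOf_childOf T E hac ⟨h, h1⟩)
  · exact Or.inr (posOf_childOf T E hac ⟨h.symm, h1⟩)

end Cov

section Aside

variable {K : Type u} (G : SimpleGraph V) (v₀ : V)
  (βroot : K ≃ ↥(G.neighborSet v₀))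
  (βe : ∀ p v : V, G.Adj p v → (K ≃ ↥(G.neighborSet v \ {p})))

/-- Walk down the tree according to a list of instructions, tracking (vertex, parent). -/
noncomputable def gp : (l : List K) →
    {q : V × V // (l = [] → q = (v₀, v₀)) ∧ (l ≠ [] → G.Adj q.2 q.1)}
  | [] => ⟨(v₀, v₀), by simp⟩
  | (k :: []) => ⟨((βroot k : V), v₀), by
      refine ⟨by simp, fun _ => ?_⟩
      exact (βroot k).2⟩
  | (k :: k' :: l) =>
    let prev := gp (k' :: l)
    have hadj : G.Adj prev.1.2 prev.1.1 := prev.2.2 (List.cons_ne_nil k' l)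
    ⟨((βe prev.1.2 prev.1.1 hadj k : V), prev.1.1), by
      refine ⟨by simp, fun _ => ?_⟩
      exact (βe prev.1.2 prev.1.1 hadj k).2.1⟩

/-- The vertex at position `l`. -/
noncomputable def gV (l : List K) : V := (gp G v₀ βroot βe l).1.1

/-- The parent of the vertex at position `l`. -/
noncomputable def gPar (l : List K) : V := (gp G v₀ βroot βe l).1.2

lemma gV_nil : gV G v₀ βroot βe [] = v₀ := rfl

lemma gPar_cons (k : K) (l : List K) :
    gPar G v₀ βroot βe (k :: l) = gV G v₀ βroot βe l := by
  match l with
  | [] => rfl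
  | (k' :: l') => rfl

lemma adj_par (l : List K) (h : l ≠ []) :
    G.Adj (gPar G v₀ βroot βe l) (gV G v₀ βroot βe l) :=
  (gp G v₀ βroot βe l).2.2 h

lemma adj_g (k : K) (l : List K) :
    G.Adj (gV G v₀ βroot βe l) (gV G v₀ βroot βe (k :: l)) := by
  have := (gp G v₀ βroot βe (k :: l)).2.2 (List.cons_ne_nil k l)
  rwa [show (gp G v₀ βroot βe (k :: l)).1.2 = gV G v₀ βroot βe l from gPar_cons G v₀ βroot βe k l]
    at this

lemma gV_cons_root (k : K) : gV G v₀ βroot βe (k :: []) = ↑(βroot k) := rfl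

lemma gV_cons (k k' : K) (l : List K) :
    gV G v₀ βroot βe (k :: k' :: l) =
      ↑(βe (gPar G v₀ βroot βe (k' :: l)) (gV G v₀ βroot βe (k' :: l))
        (adj_par G v₀ βroot βe (k' :: l) (List.cons_ne_nil k' l)) k) := rfl

lemma gV_cons_ne (k : K) (l : List K) (h : l ≠ []) :
    gV G v₀ βroot βe (k :: l) ≠ gPar G v₀ βroot βe l := by
  match l with
  | (k' :: l') =>
    rw [gV_cons G v₀ βroot βe k k' l']
    have := (βe (gPar G v₀ βroot βe (k' :: l')) (gV G v₀ βroot βe (k' :: l'))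
        (adj_par G v₀ βroot βe (k' :: l') (List.cons_ne_nil k' l')) k).2.2
    simpa using this

variable (htree : G.IsTree)
include htree

lemma dist_gV : ∀ (n : ℕ) (l : List K), l.length = n → G.dist v₀ (gV G v₀ βroot βe l) = n := by
  intro n
  induction n using Nat.strong_induction_on with
  | _ n IH =>
    intro l hl
    rcases l with - | ⟨k, l'⟩
    · rw [← hl]
      simp [gV_nil]
    · have hn : l'.length + 1 = n := by simpa using hl
      have hIH : G.dist v₀ (gV G v₀ βroot βe l') = l'.length := IH l'.length (by omega) l' rfl
      have hadj := adj_g G v₀ βroot βe k l'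
      have hreach : G.Reachable v₀ (gV G v₀ βroot βe l') :=
        htree.isConnected.preconnected v₀ _
      rcases adj_dist_cases htree.IsAcyclic hreach hadj with hc | hc
      · omega
      · exfalso
        rcases l' with - | ⟨k', l''⟩
        · rw [gV_nil, SimpleGraph.dist_self] at hc
          omega
        · have hpar : gPar G v₀ βroot βe (k' :: l'') = gV G v₀ βroot βe l'' :=
            gPar_cons G v₀ βroot βe k' l''
          simp only [List.length_cons] at hIH hn
          have hd'' : G.dist v₀ (gV G v₀ βroot βe l'') = l''.length :=
            IH l''.length (by omega) l'' rfl
          have huniq := parent_unique htree.IsAcyclic hreach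
            ((adj_g G v₀ βroot βe k (k' :: l'')).symm)
            (adj_par G v₀ βroot βe (k' :: l'') (List.cons_ne_nil k' l''))
            (by omega)
            (by rw [hpar, hd'']; omega)
          exact gV_cons_ne G v₀ βroot βe k (k' :: l'') (List.cons_ne_nil k' l'') huniq

lemma gV_injective : ∀ (n : ℕ) (l m : List K), l.length = n →
    gV G v₀ βroot βe l = gV G v₀ βroot βe m → l = m := by
  intro n
  induction n using Nat.strong_induction_on with
  | _ n IH =>
    intro l m hl hg
    have hlen : m.length = n := by
      have h1 := dist_gV G v₀ βroot βe htree n l hl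
      have h2 := dist_gV G v₀ βroot βe htree m.length m rfl
      rw [hg] at h1
      omega
    rcases l with - | ⟨k, l'⟩
    · rcases m with - | ⟨j, m'⟩
      · rfl
      · simp at hlen hl; omega
    · rcases m with - | ⟨j, m'⟩
      · simp at hlen hl; omega
      · have hn : l'.length + 1 = n := by simpa using hl
        have hm : m'.length = l'.length := by simp at hlen; omega
        have hrl : G.Reachable v₀ (gV G v₀ βroot βe (k :: l')) :=
          htree.isConnected.preconnected v₀ _
        have hpeq : gV G v₀ βroot βe l' = gV G v₀ βroot βe m' := by
          apply parent_unique htree.IsAcyclic hrl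
            (adj_g G v₀ βroot βe k l') (by rw [hg]; exact adj_g G v₀ βroot βe j m')
          · rw [dist_gV G v₀ βroot βe htree l'.length l' rfl,
              dist_gV G v₀ βroot βe htree n (k :: l') hl]
            omega
          · rw [dist_gV G v₀ βroot βe htree m'.length m' rfl,
              dist_gV G v₀ βroot βe htree n (k :: l') hl]
            omega
        have hlm : l' = m' := IH l'.length (by omega) l' m' rfl hpeq
        subst hlm
        rcases l' with - | ⟨k', l''⟩
        · have : (βroot k : V) = ↑(βroot j) := by
            rw [← gV_cons_root G v₀ βroot βe k, ← gV_cons_root G v₀ βroot βe j]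
            exact hg
          have hk : k = j := βroot.injective (Subtype.coe_injective this)
          rw [hk]
        · have h1 := (gV_cons G v₀ βroot βe k k' l'').symm.trans
            (hg.trans (gV_cons G v₀ βroot βe j k' l''))
          have hk : k = j :=
            (βe (gPar G v₀ βroot βe (k' :: l'')) (gV G v₀ βroot βe (k' :: l''))
              (adj_par G v₀ βroot βe (k' :: l'') (List.cons_ne_nil k' l''))).injective
              (Subtype.coe_injective h1)
          rw [hk]

lemma gV_surjective (v : V) : ∃ l : List K, gV G v₀ βroot βe l = v := by
  suffices H : ∀ (n : ℕ) (v : V), G.dist v₀ v = n → ∃ l : List K, gV G v₀ βroot βe l = v by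
    exact H (G.dist v₀ v) v rfl
  intro n
  induction n using Nat.strong_induction_on with
  | _ n IH =>
    intro v hv
    rcases Nat.eq_zero_or_pos n with h0 | hpos
    · subst h0
      have : v₀ = v := ((htree.isConnected.preconnected v₀ v).dist_eq_zero_iff).mp hv
      exact ⟨[], this⟩
    · obtain ⟨u, hu, hud⟩ := parent_exists (htree.isConnected.preconnected v₀ v) (by omega)
      obtain ⟨l, hlv⟩ := IH (G.dist v₀ u) (by omega) u rfl
      have hlen : l.length = G.dist v₀ u := by
        have := dist_gV G v₀ βroot βe htree l.length l rfl
        rw [hlv] at this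
        omega
      rcases l with - | ⟨k', l'⟩
      · -- u = v₀
        have huv : u = v₀ := hlv.symm
        refine ⟨[βroot.symm ⟨v, ?_⟩], ?_⟩
        · rw [SimpleGraph.mem_neighborSet, ← huv]
          exact hu
        · rw [gV_cons_root, Equiv.apply_symm_apply]
      · have hne : v ≠ gPar G v₀ βroot βe (k' :: l') := by
          intro he
          have hp1 : gPar G v₀ βroot βe (k' :: l') = gV G v₀ βroot βe l' :=
            gPar_cons G v₀ βroot βe k' l'
          have hp2 : G.dist v₀ (gV G v₀ βroot βe l') = l'.length :=
            dist_gV G v₀ βroot βe htree l'.length l' rfl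
          have hv2 := hv
          rw [he, hp1, hp2] at hv2
          simp only [List.length_cons] at hlen
          omega
        have hmem : v ∈ G.neighborSet (gV G v₀ βroot βe (k' :: l')) \ {gPar G v₀ βroot βe (k' :: l')} := by
          rw [Set.mem_diff]
          refine ⟨?_, by simpa using hne⟩
          rw [SimpleGraph.mem_neighborSet, hlv]
          exact hu
        refine ⟨(βe (gPar G v₀ βroot βe (k' :: l')) (gV G v₀ βroot βe (k' :: l'))
          (adj_par G v₀ βroot βe (k' :: l') (List.cons_ne_nil k' l'))).symm ⟨v, hmem⟩ ::
          (k' :: l'), ?_⟩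
        rw [gV_cons, Equiv.apply_symm_apply]

/-- The tree-side bijection. -/
noncomputable def equivA : List K ≃ V :=
  Equiv.ofBijective (gV G v₀ βroot βe)
    ⟨fun l m h => gV_injective G v₀ βroot βe htree l.length l m rfl h,
     fun v => gV_surjective G v₀ βroot βe htree v⟩

lemma equivA_adj (k : K) (l : List K) :
    G.Adj (equivA G v₀ βroot βe htree l) (equivA G v₀ βroot βe htree (k :: l)) :=
  adj_g G v₀ βroot βe k l

end Aside

end Stmt19

/-- Every forest without isolated vertices with exactly `κ` components, each of order at
most `κ`, embeds as a spanning subgraph of the `κ`-regular tree. -/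
theorem stmt_19 (κ : Cardinal.{u}) (hκ : ℵ₀ ≤ κ) {W : Type u} (T : SimpleGraph W)
    (hac : T.IsAcyclic) (hni : T.NoIsolatedVerts)
    (hcomp : #(T.ConnectedComponent) = κ)
    (hord : ∀ c : T.ConnectedComponent, #c.supp ≤ κ)
    {V : Type u} (G : SimpleGraph V) (htree : G.IsTree) (hreg : G.CardRegular κ) :
    ∃ F : SimpleGraph V, F ≤ G ∧ Nonempty (T ≃g F) := by
  classical
  open Stmt19 in
  have hWge : κ ≤ #W := by
    rw [← hcomp]
    exact Cardinal.mk_le_of_surjective (f := T.connectedComponentMk) fun c => c.exists_rep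
  have hWle : #W ≤ κ := by
    have e1 : #W = Cardinal.sum (fun c : T.ConnectedComponent => #(c.supp)) := by
      rw [← Cardinal.mk_sigma]
      apply Cardinal.mk_congr
      refine (Equiv.sigmaFiberEquiv T.connectedComponentMk).symm.trans ?_
      exact Equiv.sigmaCongrRight fun c =>
        Equiv.subtypeEquivRight fun v =>
          (SimpleGraph.ConnectedComponent.mem_supp_iff c v).symm
    rw [e1]
    calc Cardinal.sum (fun c : T.ConnectedComponent => #(c.supp))
        ≤ Cardinal.sum (fun _ : T.ConnectedComponent => κ) := Cardinal.sum_le_sum _ _ hord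
      _ = #(T.ConnectedComponent) * κ := Cardinal.sum_const' _ _
      _ = κ * κ := by rw [hcomp]
      _ = κ := Cardinal.mul_eq_self hκ
  have hW : #W = κ := le_antisymm hWle hWge
  haveI : Infinite W := Cardinal.infinite_iff.mpr (hW ▸ hκ)
  have hEcard : #(T.ConnectedComponent) = #(Option (ULift.{u} ℕ × W)) := by
    rw [hcomp, Cardinal.mk_option, Cardinal.mk_prod, Cardinal.lift_id, Cardinal.lift_id,
      Cardinal.mk_eq_aleph0 (ULift.{u} ℕ), hW, Cardinal.aleph0_mul_eq hκ,
      Cardinal.add_one_eq hκ]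
  let E : T.ConnectedComponent ≃ Option (ULift.{u} ℕ × W) :=
    Classical.choice (Cardinal.eq.mp hEcard)
  have hK : #(W ⊕ W) = κ := by
    have hsum : #(W ⊕ W) = #W + #W := by simp [Cardinal.mk_sum]
    rw [hsum, hW]
    exact Cardinal.add_eq_self hκ
  haveI : Nonempty V := htree.isConnected.nonempty
  let v₀ : V := Classical.arbitrary V
  let βroot : (W ⊕ W) ≃ ↥(G.neighborSet v₀) :=
    Classical.choice (Cardinal.eq.mp (hK.trans (hreg v₀).symm))
  have hβe : ∀ p v : V, G.Adj p v → Nonempty ((W ⊕ W) ≃ ↥(G.neighborSet v \ {p})) := by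
    intro p v h
    apply Cardinal.eq.mp
    rw [hK]
    have hsub : ({p} : Set V) ⊆ G.neighborSet v := by
      intro x hx
      rw [Set.mem_singleton_iff] at hx
      subst hx
      exact h.symm
    have hdm := Cardinal.mk_diff_add_mk hsub
    rw [Cardinal.mk_singleton, hreg v] at hdm
    have hx : ℵ₀ ≤ #(G.neighborSet v \ {p} : Set V) := by
      by_contra hc
      push_neg at hc
      have hlt : #(G.neighborSet v \ {p} : Set V) + 1 < ℵ₀ :=
        Cardinal.add_lt_aleph0 hc Cardinal.one_lt_aleph0
      rw [hdm] at hlt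
      exact absurd hκ (not_le.mpr hlt)
    rw [← hdm, Cardinal.add_one_eq hx]
  let βe : ∀ p v : V, G.Adj p v → ((W ⊕ W) ≃ ↥(G.neighborSet v \ {p})) :=
    fun p v h => Classical.choice (hβe p v h)
  let ΨB : W ≃ List (W ⊕ W) := Stmt19.equivB T E hac
  let ΨA : List (W ⊕ W) ≃ V := Stmt19.equivA G v₀ βroot βe htree
  let Ψ : W ≃ V := ΨB.trans ΨA
  have hedge : ∀ a b : W, T.Adj a b → G.Adj (Ψ a) (Ψ b) := by
    intro a b hab
    rcases Stmt19.equivB_adj T E hac hab with h | h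
    · have h2 := Stmt19.equivA_adj G v₀ βroot βe htree (Sum.inl b) (ΨB a)
      rw [← h] at h2
      exact h2
    · have h2 := Stmt19.equivA_adj G v₀ βroot βe htree (Sum.inl a) (ΨB b)
      rw [← h] at h2
      exact h2.symm
  refine ⟨SimpleGraph.comap (Ψ.symm : V → W) T, ?_, ⟨⟨Ψ, ?_⟩⟩⟩
  · intro x y hxy
    have h3 := hedge _ _ hxy
    simpa using h3
  · intro a b
    show T.Adj (Ψ.symm (Ψ a)) (Ψ.symm (Ψ b)) ↔ T.Adj a b
    simp
end
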